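/- arXiv:1302.0034 — 6 statements merged into one kernel-verified Lean document; each statement's English description precedes it below -/
import Mathlib

section
/- Let G be a topological group in which the identity has a neighborhood basis of pro-p subgroups (p prime). Every strongly compact element g of G (i.e. g lies in a compact subgroup) has a unique decomposition g = g_u · g_s = g_s · g_u where g_u is topologically unipotent (lim_{n→∞} g_u^{p^n} = 1) and g_s is residually semisimple (of finite order prime to p). -/
open Filter Topology

/-- A surrogate definition of a pro-`p` subgroup: a compact subgroup all of whose elements
are topologically `p`-unipotent (i.e. `x ^ p ^ n → 1`). -/
def IsProPSubgroup (p : ℕ) {G : Type*} [Group G] [TopologicalSpace G] (K : Subgroup G) : Prop :=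
  IsCompact (K : Set G) ∧ ∀ x ∈ K, Tendsto (fun n : ℕ => x ^ p ^ n) atTop (𝓝 1)

/-- The neighbourhood filter of `1` has a basis consisting of pro-`p` subgroups. -/
def HasProPBasis (p : ℕ) (G : Type*) [Group G] [TopologicalSpace G] : Prop :=
  ∀ U ∈ 𝓝 (1 : G), ∃ K : Subgroup G,
    IsProPSubgroup p K ∧ (K : Set G) ∈ 𝓝 (1 : G) ∧ (K : Set G) ⊆ U

/-- `g` lies in a compact subgroup of `G`. -/
def StronglyCompact {G : Type*} [Group G] [TopologicalSpace G] (g : G) : Prop :=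
  ∃ K : Subgroup G, IsCompact (K : Set G) ∧ g ∈ K

/-- `g ^ (p ^ n) → 1`. -/
def TopologicallyUnipotent (p : ℕ) {G : Type*} [Group G] [TopologicalSpace G] (g : G) : Prop :=
  Tendsto (fun n : ℕ => g ^ p ^ n) atTop (𝓝 1)

/-- `g` has finite order prime to `p`. -/
def ResiduallySemisimple (p : ℕ) {G : Type*} [Group G] (g : G) : Prop :=
  ∃ N : ℕ, 0 < N ∧ Nat.Coprime N p ∧ g ^ N = 1

section Helpers

variable {G : Type*} [Group G] [TopologicalSpace G] {p : ℕ}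

set_option linter.unusedSectionVars false

/-- Uniform version of topological unipotence: all sufficiently `p`-divisible powers of a
topologically unipotent element lie in any given neighbourhood of `1`. -/
lemma TJD.lemA (hG : HasProPBasis p G) {x : G} (hx : TopologicallyUnipotent p x)
    {U : Set G} (hU : U ∈ 𝓝 1) :
    ∃ b : ℕ, (∀ n : ℕ, x ^ (p ^ b * n) ∈ U) ∧ (∀ z : ℤ, x ^ ((p ^ b : ℕ) * z) ∈ U) := by
  obtain ⟨V, hVpro, hVnhds, hVU⟩ := hG U hU
  obtain ⟨b, hb⟩ := (hx.eventually_mem hVnhds).exists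
  refine ⟨b, fun n => hVU ?_, fun z => hVU ?_⟩
  · rw [pow_mul]; exact V.pow_mem hb n
  · have : x ^ ((p ^ b : ℕ) * z) = (x ^ (p ^ b)) ^ z := by
      rw [← zpow_natCast x (p ^ b), ← zpow_mul]
    rw [this]; exact V.zpow_mem hb z

/-- If `x ^ p ^ b` is topologically unipotent then so is `x`. -/
lemma TJD.tail {b : ℕ} {x : G} (h : TopologicallyUnipotent p (x ^ p ^ b)) :
    TopologicallyUnipotent p x := by
  have h2 : Tendsto (fun n : ℕ => (x ^ p ^ b) ^ p ^ (n - b)) atTop (𝓝 1) :=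
    h.comp (tendsto_sub_atTop_nat b)
  refine h2.congr' ?_
  filter_upwards [eventually_ge_atTop b] with n hn
  rw [← pow_mul, ← pow_add, Nat.add_sub_cancel' hn]

/-- Every element of the closure of the cyclic group generated by a topologically unipotent
element is topologically unipotent. -/
lemma TJD.lemB [IsTopologicalGroup G] [T2Space G] (hG : HasProPBasis p G) {x : G} (hx : TopologicallyUnipotent p x)
    {y : G} (hy : y ∈ closure (Subgroup.zpowers x : Set G)) :
    TopologicallyUnipotent p y := by
  obtain ⟨V, hVpro, hVnhds, -⟩ := hG Set.univ Filter.univ_mem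
  obtain ⟨b, -, hbz⟩ := TJD.lemA hG hx hVnhds
  have hyV : y ^ p ^ b ∈ (V : Set G) := by
    have himg : (fun w : G => w ^ p ^ b) '' (Subgroup.zpowers x : Set G) ⊆ (V : Set G) := by
      rintro - ⟨w, hw, rfl⟩
      obtain ⟨z, rfl⟩ := Subgroup.mem_zpowers_iff.mp hw
      have : (x ^ z) ^ (p ^ b : ℕ) = x ^ ((p ^ b : ℕ) * z) := by
        rw [← zpow_natCast (x ^ z) (p ^ b), ← zpow_mul, mul_comm]
      show (x ^ z) ^ p ^ b ∈ (V : Set G)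
      rw [this]; exact hbz z
    have h1 : y ^ p ^ b ∈ (fun w : G => w ^ p ^ b) '' closure (Subgroup.zpowers x : Set G) :=
      ⟨y, hy, rfl⟩
    have h2 := image_closure_subset_closure_image (f := fun w : G => w ^ p ^ b)
      (continuous_pow (p ^ b)) (s := (Subgroup.zpowers x : Set G))
    have h4 : closure (V : Set G) = (V : Set G) := hVpro.1.isClosed.closure_eq
    exact h4 ▸ (closure_mono himg) (h2 h1)
  exact TJD.tail (hVpro.2 _ hyV)

/-- Key limit formula: if `g = u * s = s * u` with `u` topologically unipotent and
`s ^ L = 1` for `L > 0` prime to `p`, then `g ^ p ^ (k * φ L) → s`. -/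
lemma TJD.key [IsTopologicalGroup G] (hG : HasProPBasis p G) (hp : p.Prime) {g u s : G}
    (h1 : g = u * s) (h2 : g = s * u) (hu : TopologicallyUnipotent p u)
    {L : ℕ} (hL0 : 0 < L) (hLp : Nat.Coprime p L) (hsL : s ^ L = 1) :
    Tendsto (fun k : ℕ => g ^ p ^ (k * L.totient)) atTop (𝓝 s) := by
  have hus : Commute u s := by rw [Commute, SemiconjBy, ← h1, ← h2]
  have htot : 0 < L.totient := Nat.totient_pos.mpr hL0
  have hse : ∀ k : ℕ, s ^ p ^ (k * L.totient) = s := by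
    intro k
    have hmod : 1 ≡ p ^ (k * L.totient) [MOD L] := by
      have h := (Nat.ModEq.pow_totient hLp).pow k
      rw [← pow_mul, mul_comm L.totient k] at h
      simpa [one_pow] using h.symm
    have h1le : 1 ≤ p ^ (k * L.totient) := Nat.one_le_pow _ _ hp.pos
    obtain ⟨q, hq⟩ := (Nat.modEq_iff_dvd' h1le).mp hmod
    calc s ^ p ^ (k * L.totient)
        = s ^ (1 + (p ^ (k * L.totient) - 1)) := by rw [Nat.add_sub_cancel' h1le]
      _ = s * (s ^ L) ^ q := by rw [pow_add, pow_one, hq, pow_mul]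
      _ = s := by rw [hsL, one_pow, mul_one]
  have hut : Tendsto (fun k : ℕ => u ^ p ^ (k * L.totient)) atTop (𝓝 1) := by
    rw [tendsto_def]
    intro U hU
    obtain ⟨b, hbn, -⟩ := TJD.lemA hG hu hU
    filter_upwards [eventually_ge_atTop b] with k hk
    have hble : b ≤ k * L.totient := le_trans hk (Nat.le_mul_of_pos_right k htot)
    show u ^ p ^ (k * L.totient) ∈ U
    have : p ^ (k * L.totient) = p ^ b * p ^ (k * L.totient - b) := by
      rw [← pow_add, Nat.add_sub_cancel' hble]
    rw [this]; exact hbn _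
  have hfin := hut.mul_const s
  rw [one_mul] at hfin
  refine hfin.congr fun k => ?_
  rw [h1, hus.mul_pow, hse k]

end Helpers

/-- Topological Jordan decomposition: every strongly compact element `g` of a topological
group whose identity has a neighbourhood basis of pro-`p` subgroups admits a unique
decomposition `g = gᵤ * gₛ = gₛ * gᵤ` with `gᵤ` topologically unipotent and `gₛ`
residually semisimple. -/
theorem topological_jordan_decomposition {G : Type*} [Group G] [TopologicalSpace G]
    [IsTopologicalGroup G] [T2Space G] (p : ℕ) (hp : p.Prime) (hG : HasProPBasis p G)
    (g : G) (hg : StronglyCompact g) :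
    ∃! d : G × G, g = d.1 * d.2 ∧ g = d.2 * d.1 ∧
      TopologicallyUnipotent p d.1 ∧ ResiduallySemisimple p d.2 := by
  obtain ⟨K, hKc, hgK⟩ := hg
  obtain ⟨K₀, hK₀pro, hK₀nhds, -⟩ := hG Set.univ Filter.univ_mem
  -- Step 1: find `N > 0` with `g ^ N ∈ K₀`.
  have hmapK : Filter.map (fun n : ℕ => g ^ n) atTop ≤ Filter.principal (K : Set G) := by
    rw [Filter.le_principal_iff, Filter.mem_map]
    exact Filter.univ_mem' fun n => K.pow_mem hgK n
  obtain ⟨x, -, hx⟩ := hKc hmapK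
  have hS : (fun y : G => x⁻¹ * y) ⁻¹' (K₀ : Set G) ∈ 𝓝 x := by
    have hc : ContinuousAt (fun y : G => x⁻¹ * y) x :=
      (continuous_const.mul continuous_id).continuousAt
    have h1x : (fun y : G => x⁻¹ * y) x = 1 := inv_mul_cancel x
    exact hc.preimage_mem_nhds (by rw [inv_mul_cancel]; exact hK₀nhds)
  have hfreq : ∃ᶠ n in atTop, x⁻¹ * g ^ n ∈ (K₀ : Set G) := by
    have hfr : ∃ᶠ y in Filter.map (fun n : ℕ => g ^ n) atTop,
        y ∈ (fun y : G => x⁻¹ * y) ⁻¹' (K₀ : Set G) :=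
      Filter.inf_neBot_iff_frequently_left.mp hx
        (by exact hS : ∀ᶠ y in 𝓝 x, y ∈ (fun y : G => x⁻¹ * y) ⁻¹' (K₀ : Set G))
    rwa [Filter.frequently_map] at hfr
  obtain ⟨n₁, -, hn₁⟩ := Filter.frequently_atTop.mp hfreq 0
  obtain ⟨n₂, hn₂ge, hn₂⟩ := Filter.frequently_atTop.mp hfreq (n₁ + 1)
  have hle : n₁ ≤ n₂ := le_trans (Nat.le_succ n₁) hn₂ge
  set N := n₂ - n₁ with hNdef
  have hN0 : 0 < N := Nat.sub_pos_of_lt (lt_of_lt_of_le (Nat.lt_succ_self n₁) hn₂ge)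
  have hgN : g ^ N ∈ K₀ := by
    have hpow : g ^ n₁ * g ^ N = g ^ n₂ := by rw [← pow_add, Nat.add_sub_cancel' hle]
    have heq : g ^ N = (x⁻¹ * g ^ n₁)⁻¹ * (x⁻¹ * g ^ n₂) := by
      rw [← hpow]; group
    rw [heq]
    exact K₀.mul_mem (K₀.inv_mem hn₁) hn₂
  -- Step 2: `u₀ := g ^ m` is topologically unipotent, `m` the prime-to-`p` part of `N`.
  set a := N.factorization p with hadef
  set m := ordCompl[p] N with hmdef
  have hm0 : 0 < m := Nat.ordCompl_pos p hN0.ne'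
  have hmp : Nat.Coprime p m := Nat.coprime_ordCompl hp hN0.ne'
  have hNam : p ^ a * m = N := Nat.ordProj_mul_ordCompl_eq_self N p
  set u₀ := g ^ m with hu₀def
  have hu₀K : u₀ ^ p ^ a ∈ K₀ := by
    rw [hu₀def, ← pow_mul, mul_comm m (p ^ a), hNam]; exact hgN
  have hu₀ : TopologicallyUnipotent p u₀ := TJD.tail (hK₀pro.2 _ hu₀K)
  -- Step 3: cluster point of `g ^ c k`, `c k = p ^ (k * φ m)`.
  set c : ℕ → ℕ := fun k => p ^ (k * m.totient) with hcdef
  have htm : 0 < m.totient := Nat.totient_pos.mpr hm0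
  have hc1 : ∀ k, 1 ≤ c k := fun k => Nat.one_le_pow _ _ hp.pos
  have hcd : ∀ k, m ∣ c k - 1 := by
    intro k
    have hmod : 1 ≡ c k [MOD m] := by
      have h := (Nat.ModEq.pow_totient hmp).pow k
      rw [← pow_mul, mul_comm m.totient k] at h
      simpa [one_pow] using h.symm
    exact (Nat.modEq_iff_dvd' (hc1 k)).mp hmod
  have hFK : Filter.map (fun k : ℕ => g ^ c k) atTop ≤ Filter.principal (K : Set G) := by
    rw [Filter.le_principal_iff, Filter.mem_map]
    exact Filter.univ_mem' fun k => K.pow_mem hgK (c k)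
  obtain ⟨s, -, hscl⟩ := hKc hFK
  -- `s` commutes with `g`.
  have hgs : g * s = s * g := by
    have hclosed : IsClosed {y : G | g * y = y * g} :=
      isClosed_eq (continuous_const.mul continuous_id) (continuous_id.mul continuous_const)
    have hmem : Filter.map (fun k : ℕ => g ^ c k) atTop ≤
        Filter.principal {y : G | g * y = y * g} := by
      rw [Filter.le_principal_iff, Filter.mem_map]
      exact Filter.univ_mem' fun k => ((Commute.refl g).pow_right (c k)).eq
    have hcp : ClusterPt s (Filter.principal {y : G | g * y = y * g}) := hscl.mono hmem
    have := mem_closure_iff_clusterPt.mpr hcp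
    rwa [hclosed.closure_eq] at this
  -- `s ^ m = 1`.
  have hsm : s ^ m = 1 := by
    have htm1 : Tendsto (fun k : ℕ => (g ^ c k) ^ m) atTop (𝓝 1) := by
      have hcongr : ∀ k : ℕ, (g ^ c k) ^ m = u₀ ^ c k := by
        intro k; rw [hu₀def, ← pow_mul, ← pow_mul, mul_comm]
      rw [tendsto_def]
      intro U hU
      obtain ⟨b, hbn, -⟩ := TJD.lemA hG hu₀ hU
      filter_upwards [eventually_ge_atTop b] with k hk
      have hble : b ≤ k * m.totient := le_trans hk (Nat.le_mul_of_pos_right k htm)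
      show (g ^ c k) ^ m ∈ U
      rw [hcongr k]
      have : c k = p ^ b * p ^ (k * m.totient - b) := by
        rw [hcdef, ← pow_add, Nat.add_sub_cancel' hble]
      rw [this]; exact hbn _
    have hcl2 : ClusterPt (s ^ m) (Filter.map (fun y : G => y ^ m)
        (Filter.map (fun k : ℕ => g ^ c k) atTop)) :=
      hscl.map (continuous_pow m).continuousAt Filter.tendsto_map
    rw [Filter.map_map] at hcl2
    have hcl3 : ClusterPt (s ^ m) (𝓝 (1 : G)) := hcl2.mono htm1
    exact t2_iff_nhds.mp ‹T2Space G› hcl3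
  -- `u := g * s⁻¹` is topologically unipotent.
  have hucl : ClusterPt (g * s⁻¹) (Filter.map (fun y : G => g * y⁻¹)
      (Filter.map (fun k : ℕ => g ^ c k) atTop)) :=
    hscl.map (continuous_const.mul continuous_inv).continuousAt Filter.tendsto_map
  have hsub : Filter.map (fun y : G => g * y⁻¹) (Filter.map (fun k : ℕ => g ^ c k) atTop) ≤
      Filter.principal (Subgroup.zpowers u₀ : Set G) := by
    rw [Filter.map_map, Filter.le_principal_iff, Filter.mem_map]
    refine Filter.univ_mem' fun k => ?_
    obtain ⟨e, he⟩ := hcd k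
    have h5 : g ^ c k = u₀ ^ e * g := by
      rw [hu₀def, ← pow_mul, ← he, ← pow_succ, Nat.sub_add_cancel (hc1 k)]
    show g * (g ^ c k)⁻¹ ∈ (Subgroup.zpowers u₀ : Set G)
    have h6 : g * (g ^ c k)⁻¹ = (u₀ ^ e)⁻¹ := by
      rw [h5, mul_inv_rev, mul_inv_cancel_left]
    rw [h6]
    exact (Subgroup.zpowers u₀).inv_mem ((Subgroup.zpowers u₀).pow_mem (Subgroup.mem_zpowers u₀) e)
  have humem : g * s⁻¹ ∈ closure (Subgroup.zpowers u₀ : Set G) :=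
    mem_closure_iff_clusterPt.mpr (hucl.mono hsub)
  have hu : TopologicallyUnipotent p (g * s⁻¹) := TJD.lemB hG hu₀ humem
  -- Assemble.
  have h1 : g = (g * s⁻¹) * s := (inv_mul_cancel_right g s).symm
  have h2 : g = s * (g * s⁻¹) := by rw [← mul_assoc, ← hgs, mul_inv_cancel_right]
  refine ⟨(g * s⁻¹, s), ⟨h1, h2, hu, m, hm0, hmp.symm, hsm⟩, ?_⟩
  rintro ⟨u', s'⟩ ⟨h1', h2', hu', M', hM'0, hM'p, hs'M⟩
  -- Uniqueness via the key limit formula with `L = M' * m`.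
  set L := M' * m with hLdef
  have hL0 : 0 < L := Nat.mul_pos hM'0 hm0
  have hLp : Nat.Coprime p L := Nat.Coprime.mul_right hM'p.symm hmp
  have hsL : s ^ L = 1 := by rw [hLdef, mul_comm, pow_mul, hsm, one_pow]
  have hs'L : s' ^ L = 1 := by rw [hLdef, pow_mul, hs'M, one_pow]
  have t1 := TJD.key hG hp h1 h2 hu hL0 hLp hsL
  have t2 := TJD.key hG hp h1' h2' hu' hL0 hLp hs'L
  have hss' : s' = s := tendsto_nhds_unique t2 t1
  have hu'u : u' = g * s⁻¹ := by
    rw [hss'] at h1'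
    exact eq_mul_inv_iff_mul_eq.mpr h1'.symm
  exact Prod.ext hu'u hss'
end

section
/- The topological Jordan decomposition is functorial: if φ : G → G' is a continuous homomorphism of topological groups (each having a neighborhood basis of 1 by pro-p groups) and g ∈ G is strongly compact, then φ(g) is strongly compact and φ(g)_s = φ(g_s), φ(g)_u = φ(g_u). -/
open Filter Topology

/-- If `s` has finite order coprime to `p`, some positive power `p ^ d` fixes `s`. -/
lemma exists_pow_p_fix {H : Type*} [Group H] (p : ℕ) {s : H}
    (hs : ResiduallySemisimple p s) : ∃ d : ℕ, 0 < d ∧ s ^ p ^ d = s := by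
  obtain ⟨N, hN, hcop, hsN⟩ := hs
  refine ⟨N.totient, Nat.totient_pos.mpr hN, ?_⟩
  have hmod : p ^ N.totient ≡ 1 [MOD N] := Nat.ModEq.pow_totient hcop.symm
  calc s ^ p ^ N.totient = s ^ (p ^ N.totient % N) := pow_eq_pow_mod _ hsN
    _ = s ^ (1 % N) := by rw [hmod]
    _ = s ^ 1 := (pow_eq_pow_mod 1 hsN).symm
    _ = s := pow_one s

lemma pow_p_fix_mul {H : Type*} [Group H] (p : ℕ) {s : H} {d : ℕ}
    (h : s ^ p ^ d = s) (k : ℕ) : s ^ p ^ (d * k) = s := by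
  induction k with
  | zero => simp
  | succ n ih =>
      have : p ^ (d * (n + 1)) = p ^ (d * n) * p ^ d := by
        rw [← pow_add, Nat.mul_succ]
      rw [this, pow_mul, ih, h]

/-- The key limit: if `x = u * s = s * u` with `u` topologically unipotent and
`s ^ p ^ d = s` for some `d > 0`, then `x ^ p ^ (d * n) → s`. -/
lemma tendsto_pow_p_to_semisimple {H : Type*} [Group H] [TopologicalSpace H]
    [IsTopologicalGroup H] (p : ℕ) {x u s : H}
    (hd : x = u * s) (hd' : x = s * u)
    (hu : TopologicallyUnipotent p u) {d : ℕ} (hdpos : 0 < d) (hfix : s ^ p ^ d = s) :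
    Tendsto (fun n : ℕ => x ^ p ^ (d * n)) atTop (𝓝 s) := by
  have hcomm : Commute u s := by
    have : u * s = s * u := hd ▸ hd'
    exact this
  have heq : (fun n : ℕ => x ^ p ^ (d * n)) = fun n : ℕ => u ^ p ^ (d * n) * s := by
    funext n
    rw [hd, hcomm.mul_pow, pow_p_fix_mul p hfix n]
  rw [heq]
  have hmul : Tendsto (fun n : ℕ => d * n) atTop atTop :=
    tendsto_atTop_atTop.mpr fun b => ⟨b, fun n hn => le_trans hn (Nat.le_mul_of_pos_left n hdpos)⟩
  have h1 : Tendsto (fun n : ℕ => u ^ p ^ (d * n)) atTop (𝓝 1) := hu.comp hmul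
  simpa using h1.mul (tendsto_const_nhds (x := s))

/-- Uniqueness of the topological Jordan decomposition. -/
lemma jordan_unique {H : Type*} [Group H] [TopologicalSpace H]
    [IsTopologicalGroup H] [T2Space H] (p : ℕ) {x u₁ s₁ u₂ s₂ : H}
    (h1 : x = u₁ * s₁) (h1' : x = s₁ * u₁)
    (h2 : x = u₂ * s₂) (h2' : x = s₂ * u₂)
    (hu₁ : TopologicallyUnipotent p u₁) (hs₁ : ResiduallySemisimple p s₁)
    (hu₂ : TopologicallyUnipotent p u₂) (hs₂ : ResiduallySemisimple p s₂) :
    u₁ = u₂ ∧ s₁ = s₂ := by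
  obtain ⟨d₁, hd₁, hfix₁⟩ := exists_pow_p_fix p hs₁
  obtain ⟨d₂, hd₂, hfix₂⟩ := exists_pow_p_fix p hs₂
  have hfix₁' : s₁ ^ p ^ (d₁ * d₂) = s₁ := pow_p_fix_mul p hfix₁ d₂
  have hfix₂' : s₂ ^ p ^ (d₁ * d₂) = s₂ := by
    rw [Nat.mul_comm]; exact pow_p_fix_mul p hfix₂ d₁
  have hpos : 0 < d₁ * d₂ := Nat.mul_pos hd₁ hd₂
  have t₁ := tendsto_pow_p_to_semisimple p h1 h1' hu₁ hpos hfix₁'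
  have t₂ := tendsto_pow_p_to_semisimple p h2 h2' hu₂ hpos hfix₂'
  have hs : s₁ = s₂ := tendsto_nhds_unique t₁ t₂
  refine ⟨?_, hs⟩
  have : u₁ * s₁ = u₂ * s₁ := by rw [← h1, hs, ← h2]
  exact mul_right_cancel this

/-- Functoriality of the topological Jordan decomposition: a continuous homomorphism `φ`
maps the topological Jordan decomposition `g = gᵤ * gₛ` of a strongly compact element to
the topological Jordan decomposition of `φ g`; i.e. `φ g` is strongly compact, with
`(φ g)ₛ = φ gₛ` and `(φ g)ᵤ = φ gᵤ` (expressed via the uniqueness of the decomposition). -/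
theorem topological_jordan_decomposition_functorial {G G' : Type*}
    [Group G] [TopologicalSpace G] [IsTopologicalGroup G] [T2Space G]
    [Group G'] [TopologicalSpace G'] [IsTopologicalGroup G'] [T2Space G']
    (p : ℕ) (hp : p.Prime) (hG : HasProPBasis p G) (hG' : HasProPBasis p G')
    (φ : G →* G') (hφ : Continuous φ)
    (g gu gs : G) (hg : StronglyCompact g)
    (hdec : g = gu * gs) (hdec' : g = gs * gu)
    (hgu : TopologicallyUnipotent p gu) (hgs : ResiduallySemisimple p gs) :
    StronglyCompact (φ g) ∧
    φ g = φ gu * φ gs ∧ φ g = φ gs * φ gu ∧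
    TopologicallyUnipotent p (φ gu) ∧ ResiduallySemisimple p (φ gs) ∧
    (∀ hu hs : G', φ g = hu * hs → φ g = hs * hu →
      TopologicallyUnipotent p hu → ResiduallySemisimple p hs →
      hu = φ gu ∧ hs = φ gs) := by
  obtain ⟨K, hK, hgK⟩ := hg
  refine ⟨⟨K.map φ, by simpa [Subgroup.coe_map] using hK.image hφ,
      Subgroup.mem_map_of_mem φ hgK⟩, by rw [hdec, map_mul], by rw [hdec', map_mul], ?_, ?_, ?_⟩
  · have h := (hφ.tendsto 1).comp hgu
    simp only [map_one] at h
    have : (φ ∘ fun n : ℕ => gu ^ p ^ n) = fun n : ℕ => (φ gu) ^ p ^ n := by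
      funext n; simp [map_pow]
    rwa [this] at h
  · obtain ⟨N, hN, hcop, hgsN⟩ := hgs
    exact ⟨N, hN, hcop, by rw [← map_pow, hgsN, map_one]⟩
  · intro hu hs h h' hhu hhs
    have hφgu : TopologicallyUnipotent p (φ gu) := by
      have h := (hφ.tendsto 1).comp hgu
      simp only [map_one] at h
      have : (φ ∘ fun n : ℕ => gu ^ p ^ n) = fun n : ℕ => (φ gu) ^ p ^ n := by
        funext n; simp [map_pow]
      rwa [this] at h
    have hφgs : ResiduallySemisimple p (φ gs) := by
      obtain ⟨N, hN, hcop, hgsN⟩ := hgs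
      exact ⟨N, hN, hcop, by rw [← map_pow, hgsN, map_one]⟩
    exact jordan_unique p h h' (by rw [hdec, map_mul]) (by rw [hdec', map_mul])
      hhu hhs hφgu hφgs
end

section
/- Let R be the ring of integers of a p-adic field with p ≠ 2, M a free R-module of finite rank r, and q : M × M → R a unimodular symmetric bilinear form. Then there exists a basis (e_1,…,e_r) of M with q(e_i,e_j) = δ_{ij} for (i,j) ≠ (r,r), and q(e_r,e_r) any prescribed unit in the square class of the discriminant of q. -/
open Matrix IsLocalRing

namespace UnimodNF

variable {R : Type*} [CommRing R]

section Helpers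

variable {ι : Type*} [Fintype ι] [DecidableEq ι]

lemma sum_single_of_support {f : ι → R} {k : ι}
    (h : ∀ m, m ≠ k → f m = 0) : ∑ m, f m = f k :=
  Finset.sum_eq_single_of_mem k (Finset.mem_univ k) fun m _ hm => h m hm

lemma sum_pair_of_support {f : ι → R} {i j : ι} (hij : i ≠ j)
    (h : ∀ m, m ≠ i → m ≠ j → f m = 0) : ∑ m, f m = f i + f j := by
  rw [← Finset.sum_pair hij]
  refine (Finset.sum_subset (Finset.subset_univ _) ?_).symm
  intro x _ hx
  simp only [Finset.mem_insert, Finset.mem_singleton, not_or] at hx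
  exact h x hx.1 hx.2

/-- identity matrix with a 2x2 block `!![a,b;c,d]` plugged in at rows/columns `i, j`. -/
def emb (i j : ι) (a b c d : R) : Matrix ι ι R :=
  Matrix.of fun k l =>
    if k = i then (if l = i then a else if l = j then b else 0)
    else if k = j then (if l = i then c else if l = j then d else 0)
    else if k = l then 1 else 0

variable {i j : ι}

lemma emb_apply_col_i (hij : i ≠ j) (a b c d : R) (m : ι) :
    emb i j a b c d m i = if m = i then a else if m = j then c else 0 := by
  simp only [emb, Matrix.of_apply]
  split_ifs <;> simp_all

lemma emb_apply_col_j (hij : i ≠ j) (a b c d : R) (m : ι) :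
    emb i j a b c d m j = if m = i then b else if m = j then d else 0 := by
  simp only [emb, Matrix.of_apply]
  split_ifs <;> simp_all

lemma emb_apply_col_other (a b c d : R) {l : ι} (hli : l ≠ i) (hlj : l ≠ j) (m : ι) :
    emb i j a b c d m l = if m = l then 1 else 0 := by
  simp only [emb, Matrix.of_apply]
  split_ifs <;> simp_all

lemma emb_apply_row_other (a b c d : R) {k : ι} (hki : k ≠ i) (hkj : k ≠ j) (m : ι) :
    emb i j a b c d k m = if k = m then 1 else 0 := by
  simp only [emb, Matrix.of_apply]
  split_ifs <;> simp_all

lemma emb_apply_row_i (hij : i ≠ j) (a b c d : R) (m : ι) :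
    emb i j a b c d i m = if m = i then a else if m = j then b else 0 := by
  simp [emb]

lemma emb_apply_row_j (hij : i ≠ j) (a b c d : R) (m : ι) :
    emb i j a b c d j m = if m = i then c else if m = j then d else 0 := by
  simp [emb, hij.symm]

lemma sum_emb_row_i (hij : i ≠ j) (a b c d : R) (g : ι → R) :
    ∑ m, emb i j a b c d i m * g m = a * g i + b * g j := by
  rw [sum_pair_of_support hij (f := fun m => emb i j a b c d i m * g m)
    (fun m hmi hmj => by show emb i j a b c d i m * g m = 0; rw [emb_apply_row_i hij]; simp [hmi, hmj])]
  rw [emb_apply_row_i hij, emb_apply_row_i hij]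
  simp [hij.symm]

lemma sum_emb_row_j (hij : i ≠ j) (a b c d : R) (g : ι → R) :
    ∑ m, emb i j a b c d j m * g m = c * g i + d * g j := by
  rw [sum_pair_of_support hij (f := fun m => emb i j a b c d j m * g m)
    (fun m hmi hmj => by show emb i j a b c d j m * g m = 0; rw [emb_apply_row_j hij]; simp [hmi, hmj])]
  rw [emb_apply_row_j hij, emb_apply_row_j hij]
  simp [hij.symm]

lemma sum_emb_row_other (a b c d : R) {k : ι} (hki : k ≠ i) (hkj : k ≠ j) (g : ι → R) :
    ∑ m, emb i j a b c d k m * g m = g k := by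
  rw [sum_single_of_support (k := k)
    (fun m hm => by show emb i j a b c d k m * g m = 0; rw [emb_apply_row_other a b c d hki hkj]; simp [Ne.symm hm])]
  rw [emb_apply_row_other a b c d hki hkj]
  simp

lemma sum_emb_col_i (hij : i ≠ j) (a b c d : R) (g : ι → R) :
    ∑ m, emb i j a b c d m i * g m = a * g i + c * g j := by
  rw [sum_pair_of_support hij (f := fun m => emb i j a b c d m i * g m)
    (fun m hmi hmj => by show emb i j a b c d m i * g m = 0; rw [emb_apply_col_i hij]; simp [hmi, hmj])]
  rw [emb_apply_col_i hij, emb_apply_col_i hij]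
  simp [hij.symm]

lemma sum_emb_col_j (hij : i ≠ j) (a b c d : R) (g : ι → R) :
    ∑ m, emb i j a b c d m j * g m = b * g i + d * g j := by
  rw [sum_pair_of_support hij (f := fun m => emb i j a b c d m j * g m)
    (fun m hmi hmj => by show emb i j a b c d m j * g m = 0; rw [emb_apply_col_j hij]; simp [hmi, hmj])]
  rw [emb_apply_col_j hij, emb_apply_col_j hij]
  simp [hij.symm]

lemma sum_emb_col_other (a b c d : R) {l : ι} (hli : l ≠ i) (hlj : l ≠ j) (g : ι → R) :
    ∑ m, emb i j a b c d m l * g m = g l := by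
  rw [sum_single_of_support (k := l)
    (fun m hm => by show emb i j a b c d m l * g m = 0; rw [emb_apply_col_other a b c d hli hlj]; simp [hm])]
  rw [emb_apply_col_other a b c d hli hlj]
  simp

lemma sum_emb_col_i' (hij : i ≠ j) (a b c d : R) (g : ι → R) :
    ∑ m, g m * emb i j a b c d m i = g i * a + g j * c := by
  rw [Finset.sum_congr rfl fun m _ => mul_comm (g m) (emb i j a b c d m i),
    sum_emb_col_i hij]
  ring

lemma emb_mul_emb (hij : i ≠ j) (a b c d a' b' c' d' : R) :
    emb i j a b c d * emb i j a' b' c' d'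
      = emb i j (a*a'+b*c') (a*b'+b*d') (c*a'+d*c') (c*b'+d*d') := by
  ext k l
  rw [Matrix.mul_apply]
  rcases eq_or_ne k i with rfl | hki
  · rw [sum_emb_row_i hij, emb_apply_row_i hij, emb_apply_row_i hij, emb_apply_row_j hij]
    split_ifs <;> ring
  · rcases eq_or_ne k j with rfl | hkj
    · rw [sum_emb_row_j hij, emb_apply_row_j hij, emb_apply_row_i hij, emb_apply_row_j hij]
      split_ifs <;> ring
    · rw [sum_emb_row_other _ _ _ _ hki hkj, emb_apply_row_other _ _ _ _ hki hkj,
        emb_apply_row_other _ _ _ _ hki hkj]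

lemma emb_one (hij : i ≠ j) : emb i j (1:R) 0 0 1 = 1 := by
  ext k l
  rw [Matrix.one_apply]
  rcases eq_or_ne k i with hk | hki
  · rw [hk, emb_apply_row_i hij]
    rcases eq_or_ne l i with hl | hli
    · rw [hl]; simp
    · rw [if_neg hli, if_neg (Ne.symm hli), ite_self]
  · rcases eq_or_ne k j with hk | hkj
    · rw [hk, emb_apply_row_j hij]
      rcases eq_or_ne l j with hl | hlj
      · rw [hl]; simp [hij.symm]
      · rw [if_neg hlj, if_neg (Ne.symm hlj)]
        rcases eq_or_ne l i with hl | hli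
        · rw [if_pos hl]
        · rw [if_neg hli]
    · rw [emb_apply_row_other _ _ _ _ hki hkj]

lemma isUnit_emb_det (hij : i ≠ j) {a b c d : R} (h : a * d - b * c = 1) :
    IsUnit (emb i j a b c d).det := by
  have hmul : emb i j a b c d * emb i j d (-b) (-c) a = 1 := by
    rw [emb_mul_emb hij]
    have e1 : a * d + b * -c = 1 := by linear_combination h
    have e2 : a * -b + b * a = 0 := by ring
    have e3 : c * d + d * -c = 0 := by ring
    have e4 : c * -b + d * a = 1 := by linear_combination h
    rw [e1, e2, e3, e4]
    exact emb_one hij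
  have := congrArg Matrix.det hmul
  rw [Matrix.det_mul, Matrix.det_one] at this
  exact IsUnit.of_mul_eq_one _ this

lemma emb_transpose (hij : i ≠ j) (a b c d : R) :
    (emb i j a b c d)ᵀ = emb i j a c b d := by
  ext k l
  show emb i j a b c d l k = emb i j a c b d k l
  rcases eq_or_ne k i with hk | hki
  · rw [hk, emb_apply_col_i hij, emb_apply_row_i hij]
  · rcases eq_or_ne k j with hk | hkj
    · rw [hk, emb_apply_col_j hij, emb_apply_row_j hij]
    · rw [emb_apply_col_other _ _ _ _ hki hkj, emb_apply_row_other _ _ _ _ hki hkj]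
      rcases eq_or_ne k l with hk | hkl
      · rw [if_pos hk, if_pos hk.symm]
      · rw [if_neg hkl, if_neg (Ne.symm hkl)]


lemma emb_conj_diagonal (hij : i ≠ j) (e : ι → R) {a b c d α β : R}
    (h1 : a*a*e i + c*c*e j = α)
    (h2 : a*b*e i + c*d*e j = 0)
    (h3 : b*b*e i + d*d*e j = β) :
    (emb i j a b c d)ᵀ * Matrix.diagonal e * emb i j a b c d
      = Matrix.diagonal (Function.update (Function.update e i α) j β) := by
  ext k l
  rw [Matrix.mul_assoc, Matrix.mul_apply]
  simp only [Matrix.transpose_apply]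
  have hin : ∀ m, (Matrix.diagonal e * emb i j a b c d) m l = e m * emb i j a b c d m l :=
    fun m => Matrix.diagonal_mul _ _ _ _
  simp only [hin]
  rcases eq_or_ne k i with hk | hki
  · rw [hk, sum_emb_col_i hij _ _ _ _ (fun m => e m * emb i j a b c d m l),
      emb_apply_row_i hij, emb_apply_row_j hij]
    rcases eq_or_ne l i with hl | hli
    · rw [hl]
      rw [if_pos rfl, if_pos rfl, Matrix.diagonal_apply_eq,
        Function.update_of_ne hij, Function.update_self]
      linear_combination h1
    · rcases eq_or_ne l j with hl | hlj
      · rw [hl]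
        rw [if_neg hij.symm, if_pos rfl, if_neg hij.symm, if_pos rfl,
          Matrix.diagonal_apply_ne _ hij]
        linear_combination h2
      · rw [if_neg hli, if_neg hlj, if_neg hli, if_neg hlj,
          Matrix.diagonal_apply_ne _ (Ne.symm hli)]
        ring
  · rcases eq_or_ne k j with hk | hkj
    · rw [hk, sum_emb_col_j hij _ _ _ _ (fun m => e m * emb i j a b c d m l),
        emb_apply_row_i hij, emb_apply_row_j hij]
      rcases eq_or_ne l i with hl | hli
      · rw [hl]
        rw [if_pos rfl, if_pos rfl, Matrix.diagonal_apply_ne _ hij.symm]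
        linear_combination h2
      · rcases eq_or_ne l j with hl | hlj
        · rw [hl]
          rw [if_neg hij.symm, if_pos rfl, if_neg hij.symm, if_pos rfl,
            Matrix.diagonal_apply_eq, Function.update_self]
          linear_combination h3
        · rw [if_neg hli, if_neg hlj, if_neg hli, if_neg hlj,
            Matrix.diagonal_apply_ne _ (Ne.symm hlj)]
          ring
    · rw [sum_emb_col_other _ _ _ _ hki hkj (fun m => e m * emb i j a b c d m l),
        emb_apply_row_other _ _ _ _ hki hkj]
      rcases eq_or_ne k l with hk | hkl
      · rw [← hk, if_pos rfl, Matrix.diagonal_apply_eq,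
          Function.update_of_ne hkj, Function.update_of_ne hki, mul_one]
      · rw [if_neg hkl, Matrix.diagonal_apply_ne _ hkl, mul_zero]

lemma emb_conj_apply_ii (hij : i ≠ j) (A : Matrix ι ι R) (a b c d : R) :
    ((emb i j a b c d)ᵀ * A * emb i j a b c d) i i
      = a*a*A i i + a*c*A i j + c*a*A j i + c*c*A j j := by
  rw [Matrix.mul_assoc, Matrix.mul_apply]
  simp only [Matrix.transpose_apply]
  rw [sum_emb_col_i hij _ _ _ _ (fun m => (A * emb i j a b c d) m i)]
  simp only [Matrix.mul_apply]
  rw [sum_emb_col_i' hij _ _ _ _ (fun m => A i m), sum_emb_col_i' hij _ _ _ _ (fun m => A j m)]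
  ring



/-- Congruence of square matrices. -/
def Cong (A B : Matrix ι ι R) : Prop :=
  ∃ P : Matrix ι ι R, IsUnit P.det ∧ B = Pᵀ * A * P

lemma Cong.refl (A : Matrix ι ι R) : Cong A A :=
  ⟨1, by simp, by simp⟩

lemma Cong.trans {A B C : Matrix ι ι R} (h1 : Cong A B) (h2 : Cong B C) : Cong A C := by
  obtain ⟨P, hP, rfl⟩ := h1
  obtain ⟨Q, hQ, rfl⟩ := h2
  exact ⟨P * Q, by simpa using hP.mul hQ, by simp [Matrix.transpose_mul, Matrix.mul_assoc]⟩

lemma Cong.isUnit_det {A B : Matrix ι ι R} (h : Cong A B) (hA : IsUnit A.det) :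
    IsUnit B.det := by
  obtain ⟨P, hP, rfl⟩ := h
  simp only [Matrix.det_mul, Matrix.det_transpose]
  exact (hP.mul hA).mul hP

lemma Cong.symm_mat {A B : Matrix ι ι R} (h : Cong A B) (hA : Aᵀ = A) : Bᵀ = B := by
  obtain ⟨P, hP, rfl⟩ := h
  simp [Matrix.transpose_mul, hA, Matrix.mul_assoc]

lemma cong_submatrix_perm (A : Matrix ι ι R) (σ : Equiv.Perm ι) :
    Cong A (A.submatrix σ σ) := by
  refine ⟨(σ.symm).toPEquiv.toMatrix, ?_, ?_⟩
  · have hd : ((σ.symm).toPEquiv.toMatrix : Matrix ι ι R).det = (Equiv.Perm.sign σ.symm : ℤ) :=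
      Matrix.det_permutation σ.symm
    rw [hd]
    rcases Int.units_eq_one_or (Equiv.Perm.sign σ.symm) with h | h <;> simp [h]
  · have ht : ((σ.symm).toPEquiv.toMatrix : Matrix ι ι R)ᵀ = σ.toPEquiv.toMatrix := by
      rw [← PEquiv.toMatrix_symm, ← Equiv.toPEquiv_symm, Equiv.symm_symm]
    rw [ht, PEquiv.toMatrix_toPEquiv_mul, PEquiv.mul_toMatrix_toPEquiv]
    ext i j
    simp

end Helpers

section FinStuff

lemma det_firstRowZero {n : ℕ} (B : Matrix (Fin (n+1)) (Fin (n+1)) R)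
    (h : ∀ j, j ≠ 0 → B 0 j = 0) :
    B.det = B 0 0 * (B.submatrix Fin.succ Fin.succ).det := by
  rw [Matrix.det_succ_row_zero, Fin.sum_univ_succ]
  have hz : ∀ j : Fin n, B 0 j.succ = 0 := fun j => h _ (Fin.succ_ne_zero j)
  simp [hz, Fin.succAbove_zero]

/-- Extension of a congruence on the lower-right block. -/
lemma cong_cons {n : ℕ} (B : Matrix (Fin (n+1)) (Fin (n+1)) R)
    (hrow : ∀ j, j ≠ 0 → B 0 j = 0) (hcol : ∀ i, i ≠ 0 → B i 0 = 0)
    {d' : Fin n → R} (h : Cong (B.submatrix Fin.succ Fin.succ) (Matrix.diagonal d')) :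
    Cong B (Matrix.diagonal (Fin.cons (B 0 0) d')) := by
  obtain ⟨P', hP', hD⟩ := h
  set P : Matrix (Fin (n+1)) (Fin (n+1)) R :=
    Matrix.of (Fin.cons (Fin.cons 1 0) fun i => Fin.cons 0 (P' i)) with hPdef
  have hP00 : P 0 0 = 1 := by simp [hPdef]
  have hP0s : ∀ j : Fin n, P 0 j.succ = 0 := fun j => by simp [hPdef]
  have hPs0 : ∀ i : Fin n, P i.succ 0 = 0 := fun i => by simp [hPdef]
  have hPss : ∀ i j : Fin n, P i.succ j.succ = P' i j := fun i j => by simp [hPdef]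
  have hd0s : ∀ l' : Fin n, Matrix.diagonal (Fin.cons (B 0 0) d') 0 l'.succ = 0 :=
    fun l' => Matrix.diagonal_apply_ne _ (Ne.symm (Fin.succ_ne_zero l'))
  have hds0 : ∀ l' : Fin n, Matrix.diagonal (Fin.cons (B 0 0) d') l'.succ 0 = 0 :=
    fun l' => Matrix.diagonal_apply_ne _ (Fin.succ_ne_zero l')
  have hd00 : Matrix.diagonal (Fin.cons (B 0 0) d') 0 0 = B 0 0 := by simp
  have hsub : Pᵀ.submatrix Fin.succ Fin.succ = P'ᵀ := by
    ext i j
    simp [Matrix.transpose_apply, hPss]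
  have hdet : P.det = P'.det := by
    rw [← Matrix.det_transpose P, det_firstRowZero Pᵀ
      (fun j hj => by
        rcases Fin.eq_zero_or_eq_succ j with rfl | ⟨j', rfl⟩
        · exact absurd rfl hj
        · exact hPs0 j'), hsub, Matrix.det_transpose]
    show P 0 0 * P'.det = P'.det
    rw [hP00, one_mul]
  refine ⟨P, by rw [hdet]; exact hP', ?_⟩
  ext k l
  rw [Matrix.mul_assoc, Matrix.mul_apply]
  simp only [Matrix.transpose_apply, Matrix.mul_apply]
  rcases Fin.eq_zero_or_eq_succ k with rfl | ⟨k', rfl⟩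
  · rcases Fin.eq_zero_or_eq_succ l with rfl | ⟨l', rfl⟩
    · rw [Fin.sum_univ_succ]
      simp [hP00, hP0s, hPs0, Fin.sum_univ_succ, hrow _ (Fin.succ_ne_zero _), hd00]
    · rw [Fin.sum_univ_succ]
      simp [hP00, hP0s, hPs0, Fin.sum_univ_succ, hrow _ (Fin.succ_ne_zero _), hd0s]
  · rcases Fin.eq_zero_or_eq_succ l with rfl | ⟨l', rfl⟩
    · rw [Fin.sum_univ_succ]
      simp [hP00, hP0s, hPs0, Fin.sum_univ_succ, hcol _ (Fin.succ_ne_zero _), hds0]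
    · have hent := congrFun (congrFun hD k') l'
      rw [Matrix.mul_assoc, Matrix.mul_apply] at hent
      simp only [Matrix.transpose_apply, Matrix.mul_apply, Matrix.submatrix_apply] at hent
      rw [Fin.sum_univ_succ]
      simp only [hP0s, hPs0, hPss, zero_mul, mul_zero, Fin.sum_univ_succ, hcol _ (Fin.succ_ne_zero _),
        hrow _ (Fin.succ_ne_zero _), zero_add, add_zero, Matrix.diagonal_apply,
        Fin.cons_succ, Fin.succ_inj]
      rw [← hent]
      simp [Matrix.diagonal_apply, Fin.succ_inj]

/-- Clear the first row and column, given a unit pivot at `(0,0)`. -/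
lemma exists_clear {n : ℕ} (A : Matrix (Fin (n+1)) (Fin (n+1)) R) (hsym : Aᵀ = A)
    (ha : IsUnit (A 0 0)) :
    ∃ B : Matrix (Fin (n+1)) (Fin (n+1)) R, Cong A B ∧ Bᵀ = B ∧ B 0 0 = A 0 0 ∧
      (∀ j, j ≠ 0 → B 0 j = 0) := by
  obtain ⟨a', ha'⟩ := ha.exists_right_inv
  set P : Matrix (Fin (n+1)) (Fin (n+1)) R :=
    Matrix.of fun k l =>
      if k = 0 then (if l = 0 then 1 else -(a' * A 0 l)) else if k = l then 1 else 0
    with hPdef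
  have hPdet : IsUnit P.det := by
    have htri : P.BlockTriangular id := by
      intro k l hlt
      have hk0 : k ≠ 0 := by
        intro h
        rw [h] at hlt
        exact absurd hlt (by simp [h])
      have hkl : k ≠ l := fun h => by rw [h] at hlt; exact lt_irrefl _ hlt
      simp [hPdef, hk0, hkl]
    rw [Matrix.det_of_upperTriangular htri]
    have : ∀ k : Fin (n+1), P k k = 1 := by
      intro k
      rcases eq_or_ne k 0 with rfl | hk
      · simp [hPdef]
      · simp [hPdef, hk]
    simp [this]
  have hPcol0 : ∀ m : Fin (n+1), P m 0 = if m = 0 then 1 else 0 := by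
    intro m
    rcases eq_or_ne m 0 with rfl | hm
    · simp [hPdef]
    · simp [hPdef, hm]
  have hAP : ∀ k l, (A * P) k l =
      if l = 0 then A k 0 else A k l - a' * A 0 l * A k 0 := by
    intro k l
    rw [Matrix.mul_apply]
    rcases eq_or_ne l 0 with rfl | hl
    · rw [if_pos rfl, sum_single_of_support (k := 0)
        (fun m hm => by rw [hPcol0]; simp [hm])]
      rw [hPcol0]
      simp
    · rw [if_neg hl, sum_pair_of_support (Ne.symm hl) (f := fun m => A k m * P m l)
        (fun m hm0 hml => by simp [hPdef, hm0, hml])]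
      simp [hPdef, hl, Ne.symm hl]
      ring
  set B := Pᵀ * A * P with hBdef
  have hBsym : Bᵀ = B := by
    rw [hBdef]
    simp [Matrix.transpose_mul, hsym, Matrix.mul_assoc]
  have hB : ∀ l, B 0 l = (A * P) 0 l := by
    intro l
    rw [hBdef, Matrix.mul_assoc, Matrix.mul_apply]
    rw [sum_single_of_support (k := 0)
      (fun m hm => by show Pᵀ 0 m * (A * P) m l = 0; rw [Matrix.transpose_apply, hPcol0]; simp [hm])]
    rw [Matrix.transpose_apply, hPcol0]
    simp
  refine ⟨B, ⟨P, hPdet, rfl⟩, hBsym, ?_, ?_⟩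
  · rw [hB 0, hAP]
    simp
  · intro j hj
    rw [hB j, hAP, if_neg hj]
    linear_combination (-(A 0 j)) * ha'

/-- Find a unit pivot: some congruent matrix has a unit at `(0,0)`. -/
lemma exists_pivot [IsLocalRing R] (h2 : IsUnit (2:R)) {n : ℕ}
    (A : Matrix (Fin (n+1)) (Fin (n+1)) R) (hsym : Aᵀ = A) (hdet : IsUnit A.det) :
    ∃ B : Matrix (Fin (n+1)) (Fin (n+1)) R, Cong A B ∧ IsUnit (B 0 0) := by
  have key : (∃ i, IsUnit (A i i)) ∨
      ∃ i j, i ≠ j ∧ IsUnit (A i i + A i j + A j i + A j j) := by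
    by_contra hcon
    push_neg at hcon
    obtain ⟨h₁, h₂⟩ := hcon
    have hmem : ∀ i j, A i j ∈ maximalIdeal R := by
      intro i j
      rcases eq_or_ne i j with rfl | hij
      · exact (IsLocalRing.mem_maximalIdeal _).2 (h₁ i)
      · obtain ⟨t, ht⟩ := h2.exists_right_inv
        have hq : A i i + A i j + A j i + A j j ∈ maximalIdeal R :=
          (IsLocalRing.mem_maximalIdeal _).2 (h₂ i j hij)
        have hii : A i i ∈ maximalIdeal R := (IsLocalRing.mem_maximalIdeal _).2 (h₁ i)
        have hjj : A j j ∈ maximalIdeal R := (IsLocalRing.mem_maximalIdeal _).2 (h₁ j)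
        have h2m : A i j + A j i ∈ maximalIdeal R := by
          have := Ideal.sub_mem _ (Ideal.sub_mem _ hq hii) hjj
          have heq : A i i + A i j + A j i + A j j - A i i - A j j = A i j + A j i := by ring
          rwa [heq] at this
        have hji : A j i = A i j := by
          have := congrFun (congrFun hsym i) j
          simpa using this
        have h2m' : 2 * A i j ∈ maximalIdeal R := by
          have heq : A i j + A j i = 2 * A i j := by rw [hji]; ring
          rwa [heq] at h2m
        have : t * (2 * A i j) ∈ maximalIdeal R := Ideal.mul_mem_left _ _ h2m'
        have heq : t * (2 * A i j) = A i j := by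
          linear_combination (A i j) * ht
        rwa [heq] at this
    have hdm : A.det ∈ maximalIdeal R := by
      rw [Matrix.det_apply']
      refine Ideal.sum_mem _ fun σ _ => ?_
      refine Ideal.mul_mem_left _ _ ?_
      rw [Fin.prod_univ_succ]
      exact Ideal.mul_mem_right _ _ (hmem _ _)
    exact ((IsLocalRing.mem_maximalIdeal _).1 hdm) hdet
  have main : ∃ B : Matrix (Fin (n+1)) (Fin (n+1)) R, Cong A B ∧ ∃ i, IsUnit (B i i) := by
    rcases key with ⟨i, hi⟩ | ⟨i, j, hij, hq⟩
    · exact ⟨A, Cong.refl A, i, hi⟩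
    · refine ⟨(emb i j 1 0 1 1)ᵀ * A * emb i j 1 0 1 1,
        ⟨emb i j 1 0 1 1, isUnit_emb_det hij (by ring), rfl⟩, i, ?_⟩
      rw [emb_conj_apply_ii hij]
      simpa using hq
  obtain ⟨B, hAB, i, hi⟩ := main
  refine ⟨B.submatrix (Equiv.swap 0 i) (Equiv.swap 0 i),
    hAB.trans (cong_submatrix_perm B (Equiv.swap 0 i)), ?_⟩
  simpa [Matrix.submatrix_apply, Equiv.swap_apply_left] using hi

/-- Diagonalization with all the weight at entry 0. -/
lemma diag_form [IsLocalRing R] (h2 : IsUnit (2:R))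
    (hrep : ∀ a b : R, IsUnit a → IsUnit b → ∃ x y : R, a*x^2 + b*y^2 = 1) :
    ∀ {n : ℕ} (A : Matrix (Fin (n+1)) (Fin (n+1)) R), Aᵀ = A → IsUnit A.det →
      ∃ c : R, IsUnit c ∧ Cong A (Matrix.diagonal (Fin.cons c fun _ => 1)) := by
  intro n
  induction n with
  | zero =>
    intro A hsym hdet
    refine ⟨A 0 0, by rwa [Matrix.det_fin_one] at hdet, 1, by simp, ?_⟩
    have h1 : (1ᵀ : Matrix (Fin 1) (Fin 1) R) * A * 1 = A := by simp
    rw [h1]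
    ext k l
    fin_cases k <;> fin_cases l <;> simp
  | succ n ih =>
    intro A hsym hdet
    obtain ⟨B₁, hAB₁, hB₁⟩ := exists_pivot h2 A hsym hdet
    have hB₁sym : B₁ᵀ = B₁ := hAB₁.symm_mat hsym
    have hB₁det : IsUnit B₁.det := hAB₁.isUnit_det hdet
    obtain ⟨B, hB₁B, hBsym, hB00, hBrow⟩ := exists_clear B₁ hB₁sym hB₁
    have hBcol : ∀ i, i ≠ 0 → B i 0 = 0 := by
      intro i hi
      have hsw : B i 0 = B 0 i := by
        have := congrFun (congrFun hBsym 0) i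
        simpa using this
      rw [hsw]
      exact hBrow i hi
    have hBdet : IsUnit B.det := hB₁B.isUnit_det hB₁det
    have ha : IsUnit (B 0 0) := by rwa [hB00]
    set C := B.submatrix Fin.succ Fin.succ with hCdef
    have hCsym : Cᵀ = C := by
      ext i j
      show B j.succ i.succ = B i.succ j.succ
      have := congrFun (congrFun hBsym i.succ) j.succ
      simpa using this
    have hCdet : IsUnit C.det := by
      rw [det_firstRowZero B hBrow] at hBdet
      exact isUnit_of_mul_isUnit_right hBdet
    obtain ⟨c', hc', hCcong⟩ := ih C hCsym hCdet
    have hBcong : Cong B (Matrix.diagonal (Fin.cons (B 0 0) (Fin.cons c' fun _ => 1))) :=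
      cong_cons B hBrow hBcol hCcong
    -- now combine the two units B 0 0 and c' sitting at positions 0 and 1
    obtain ⟨x, y, hxy⟩ := hrep (B 0 0) c' ha hc'
    set a := B 0 0
    set e : Fin (n+2) → R := Fin.cons a (Fin.cons c' fun _ => 1) with hedef
    have he0 : e 0 = a := rfl
    have he1 : e 1 = c' := rfl
    have h01 : (0 : Fin (n+2)) ≠ 1 := by simp [Fin.ext_iff]
    have hconj := emb_conj_diagonal (R := R) h01 e
      (a := c'*y) (b := x) (c := -(a*x)) (d := y) (α := a * c') (β := 1)
      (by rw [he0, he1]; ring_nf; linear_combination (a*c') * hxy)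
      (by rw [he0, he1]; ring)
      (by rw [he0, he1]; linear_combination hxy)
    have hdet2 : IsUnit (emb (0 : Fin (n+2)) 1 (c'*y) x (-(a*x)) y).det :=
      isUnit_emb_det h01 (by linear_combination hxy)
    refine ⟨a * c', ha.mul hc', hAB₁.trans (hB₁B.trans (hBcong.trans
      ⟨emb (0 : Fin (n+2)) 1 (c'*y) x (-(a*x)) y, hdet2, ?_⟩))⟩
    have hvec : Function.update (Function.update e 0 (a*c')) 1 1
        = Fin.cons (a * c') (fun _ => (1:R)) := by
      funext i
      rcases Fin.eq_zero_or_eq_succ i with rfl | ⟨i', rfl⟩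
      · rw [Function.update_of_ne h01, Function.update_self, Fin.cons_zero]
      · rw [Fin.cons_succ]
        rcases Fin.eq_zero_or_eq_succ i' with rfl | ⟨i'', rfl⟩
        · have h1s : (Fin.succ 0 : Fin (n+2)) = 1 := rfl
          rw [h1s, Function.update_self]
        · have hne1 : (i''.succ.succ : Fin (n+2)) ≠ 1 := by
            simp [Fin.ext_iff]
          rw [Function.update_of_ne hne1, Function.update_of_ne (Fin.succ_ne_zero _), hedef]
          rw [Fin.cons_succ, Fin.cons_succ]
    rw [hconj, hvec]

end FinStuff

section Rep

open Polynomial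

variable [IsLocalRing R]

lemma rep_aux [HenselianRing R (maximalIdeal R)]
    (hchar2 : (2 : ResidueField R) ≠ 0)
    (a b : R) (ha : IsUnit a) (x₀ y : R)
    (hres : residue R a * residue R x₀ ^ 2 + residue R b * residue R y ^ 2 = 1)
    (hx : residue R x₀ ≠ 0) :
    ∃ x, a * x ^ 2 + b * y ^ 2 = 1 := by
  obtain ⟨a', haa'⟩ := ha.exists_right_inv
  set f : R[X] := X ^ 2 + C (a' * (b * y ^ 2 - 1)) with hf
  have hmon : f.Monic := monic_X_pow_add_C _ (by norm_num)
  have hinv : residue R a * residue R a' = 1 := by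
    rw [← _root_.map_mul, haa', _root_.map_one]
  have heval : f.eval x₀ ∈ maximalIdeal R := by
    rw [← Ideal.Quotient.eq_zero_iff_mem]
    show residue R (f.eval x₀) = 0
    rw [hf]
    simp only [eval_add, eval_pow, eval_X, eval_C, eval_mul, eval_sub, eval_one,
      _root_.map_add, _root_.map_pow, _root_.map_mul, _root_.map_sub, _root_.map_one]
    linear_combination (residue R a') * hres - (residue R x₀)^2 * hinv
  have hder : f.derivative.eval x₀ = 2 * x₀ := by
    rw [hf, derivative_add, derivative_C, derivative_X_pow]
    simp
  have hderunit : IsUnit (Ideal.Quotient.mk (maximalIdeal R) (f.derivative.eval x₀)) := by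
    rw [hder]
    show IsUnit (residue R (2 * x₀))
    rw [_root_.map_mul]
    refine isUnit_iff_ne_zero.2 (mul_ne_zero ?_ hx)
    rw [map_ofNat]
    exact hchar2
  obtain ⟨x, hroot, -⟩ := HenselianRing.is_henselian f hmon x₀ heval hderunit
  have hroot' : x ^ 2 + a' * (b * y ^ 2 - 1) = 0 := by
    have := hroot
    rw [Polynomial.IsRoot, hf] at this
    simpa using this
  exact ⟨x, by linear_combination a * hroot' - (b * y ^ 2 - 1) * haa'⟩

lemma exists_rep [HenselianRing R (maximalIdeal R)] [Finite (ResidueField R)]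
    (p : ℕ) (hp : p.Prime) (hp2 : p ≠ 2) [CharP (ResidueField R) p]
    (a b : R) (ha : IsUnit a) (hb : IsUnit b) :
    ∃ x y : R, a * x ^ 2 + b * y ^ 2 = 1 := by
  haveI : Fintype (ResidueField R) := Fintype.ofFinite _
  have hchar2 : (2 : ResidueField R) ≠ 0 := by
    intro h
    have h2 : ((2 : ℕ) : ResidueField R) = 0 := by exact_mod_cast h
    have := (CharP.cast_eq_zero_iff (ResidueField R) p 2).1 h2
    exact hp2 ((Nat.prime_dvd_prime_iff_eq hp Nat.prime_two).1 this)
  obtain ⟨m, -, hcard⟩ := FiniteField.card (ResidueField R) p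
  have hodd : Fintype.card (ResidueField R) % 2 = 1 := by
    have hoddp : Odd (Fintype.card (ResidueField R)) := by
      rw [hcard]
      exact (hp.odd_of_ne_two hp2).pow
    exact Nat.odd_iff.1 hoddp
  have hra : residue R a ≠ 0 := by
    have := ha.map (residue R)
    exact this.ne_zero
  have hdegf : (C (residue R a) * X ^ 2 : (ResidueField R)[X]).degree = 2 :=
    degree_C_mul_X_pow 2 hra
  have hdegg : (C (residue R b) * X ^ 2 - 1 : (ResidueField R)[X]).degree = 2 := by
    have hrb : residue R b ≠ 0 := (hb.map (residue R)).ne_zero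
    have h1 : (C (residue R b) * X ^ 2 : (ResidueField R)[X]).degree = 2 :=
      degree_C_mul_X_pow 2 hrb
    rw [sub_eq_add_neg]
    rw [degree_add_eq_left_of_degree_lt]
    · exact h1
    · rw [h1, degree_neg, degree_one]
      norm_num
  obtain ⟨xb, yb, hxy⟩ := FiniteField.exists_root_sum_quadratic hdegf hdegg hodd
  obtain ⟨x₀, rfl⟩ := IsLocalRing.residue_surjective xb
  obtain ⟨y₀, rfl⟩ := IsLocalRing.residue_surjective yb
  have hxy' : residue R a * residue R x₀ ^ 2 + residue R b * residue R y₀ ^ 2 = 1 := by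
    simp only [eval_add, eval_mul, eval_pow, eval_X, eval_C, eval_sub, eval_one] at hxy
    linear_combination hxy
  rcases eq_or_ne (residue R x₀) 0 with hx0 | hx0
  · have hy0 : residue R y₀ ≠ 0 := by
      intro hy0
      rw [hx0, hy0] at hxy'
      simp at hxy'
    have hres' : residue R b * residue R y₀ ^ 2 + residue R a * residue R x₀ ^ 2 = 1 := by
      linear_combination hxy'
    obtain ⟨y, hy⟩ := rep_aux hchar2 b a hb y₀ x₀ hres' hy0
    exact ⟨x₀, y, by linear_combination hy⟩
  · obtain ⟨x, hx⟩ := rep_aux hchar2 a b ha x₀ y₀ hxy' hx0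
    exact ⟨x, y₀, hx⟩

end Rep

section Diag

variable {ι : Type*} [Fintype ι] [DecidableEq ι]

lemma diagonal_submatrix_perm (v : ι → R) (σ : Equiv.Perm ι) :
    (Matrix.diagonal v).submatrix σ σ = Matrix.diagonal (v ∘ σ) := by
  ext k l
  rw [Matrix.submatrix_apply]
  rcases eq_or_ne k l with rfl | h
  · rw [Matrix.diagonal_apply_eq, Matrix.diagonal_apply_eq]
    rfl
  · rw [Matrix.diagonal_apply_ne _ (fun hc => h (σ.injective hc)),
      Matrix.diagonal_apply_ne _ h]

end Diag

end UnimodNF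

open Matrix IsLocalRing UnimodNF

/-- Normal form for unimodular symmetric bilinear forms over the ring of integers of a
`p`-adic field, `p ≠ 2`: there is a basis `e₀, …, eₙ` with `q (eᵢ) (eⱼ) = δᵢⱼ` for
`(i,j) ≠ (n,n)`, and `q (eₙ) (eₙ)` equal to any prescribed unit in the square class of the
discriminant of `q`. -/
theorem unimodular_symmetric_normal_form
    {R : Type*} [CommRing R] [IsDomain R] [IsDiscreteValuationRing R]
    [IsAdicComplete (IsLocalRing.maximalIdeal R) R]
    [Finite (IsLocalRing.ResidueField R)]
    (p : ℕ) (hp : p.Prime) (hp2 : p ≠ 2) [CharP (IsLocalRing.ResidueField R) p]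
    {M : Type*} [AddCommGroup M] [Module R M] (n : ℕ)
    (b : Module.Basis (Fin (n + 1)) R M) (q : M →ₗ[R] M →ₗ[R] R)
    (hsymm : ∀ x y : M, q x y = q y x)
    (hunimod : IsUnit (Matrix.det (Matrix.of fun i j => q (b i) (b j))))
    (u : Rˣ)
    (hu : ∃ v : Rˣ, (u : R) = Matrix.det (Matrix.of fun i j => q (b i) (b j)) * (v : R) ^ 2) :
    ∃ e : Module.Basis (Fin (n + 1)) R M,
      (∀ i j : Fin (n + 1), (i, j) ≠ (Fin.last n, Fin.last n) →
        q (e i) (e j) = if i = j then 1 else 0) ∧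
      q (e (Fin.last n)) (e (Fin.last n)) = (u : R) := by
  classical
  set A : Matrix (Fin (n+1)) (Fin (n+1)) R := Matrix.of fun i j => q (b i) (b j) with hAdef
  have hAsym : Aᵀ = A := by
    ext i j
    exact hsymm (b j) (b i)
  -- 2 is a unit
  have h2 : IsUnit (2 : R) := by
    by_contra h
    have hm : (2 : R) ∈ maximalIdeal R := (IsLocalRing.mem_maximalIdeal _).2 h
    have hz : residue R 2 = 0 := Ideal.Quotient.eq_zero_iff_mem.2 hm
    have h2κ : ((2 : ℕ) : ResidueField R) = 0 := by
      rw [← map_natCast (residue R) 2]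
      exact hz
    have := (CharP.cast_eq_zero_iff (ResidueField R) p 2).1 h2κ
    exact hp2 ((Nat.prime_dvd_prime_iff_eq hp Nat.prime_two).1 this)
  have hrep : ∀ a c : R, IsUnit a → IsUnit c → ∃ x y : R, a * x ^ 2 + c * y ^ 2 = 1 :=
    fun a c ha hc => exists_rep p hp hp2 a c ha hc
  obtain ⟨c, hc, hcong⟩ := diag_form h2 hrep A hAsym hunimod
  set v : Fin (n+1) → R := Fin.cons c fun _ => 1 with hvdef
  have hv1 : ∀ j : Fin (n+1), j ≠ 0 → v j = 1 := by
    intro j hj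
    rcases Fin.eq_zero_or_eq_succ j with rfl | ⟨j', rfl⟩
    · exact absurd rfl hj
    · rw [hvdef]
      rw [Fin.cons_succ]
  set σ : Equiv.Perm (Fin (n+1)) := Equiv.swap 0 (Fin.last n) with hσdef
  set tc : Fin (n+1) → R := fun i => if i = Fin.last n then c else 1 with htcdef
  have hvtc : v ∘ σ = tc := by
    funext i
    show v (σ i) = tc i
    by_cases hil : i = Fin.last n
    · rw [hil, hσdef, Equiv.swap_apply_right, hvdef, Fin.cons_zero, htcdef]
      simp
    · rw [htcdef]
      simp only [if_neg hil]
      by_cases hi0 : i = 0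
      · rw [hi0, hσdef, Equiv.swap_apply_left]
        refine hv1 _ ?_
        intro hlast
        exact hil (by rw [hi0, ← hlast])
      · rw [hσdef, Equiv.swap_apply_of_ne_of_ne hi0 hil]
        exact hv1 i hi0
  have hcong2 : Cong A (Matrix.diagonal tc) := by
    have := hcong.trans (cong_submatrix_perm (Matrix.diagonal v) σ)
    rwa [diagonal_submatrix_perm, hvtc] at this
  obtain ⟨P₀, hP₀, hEq₀⟩ := hcong2
  -- determinant bookkeeping
  have hdetdiag : (Matrix.diagonal tc).det = c := by
    rw [Matrix.det_diagonal, htcdef]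
    rw [Finset.prod_ite_eq' Finset.univ (Fin.last n) (fun _ => c)]
    simp
  have hc_eq : c = A.det * P₀.det ^ 2 := by
    have := congrArg Matrix.det hEq₀
    rw [hdetdiag, Matrix.det_mul, Matrix.det_mul, Matrix.det_transpose] at this
    rw [this]
    ring
  obtain ⟨v₀, hv₀⟩ := hu
  set s : Rˣ := hP₀.unit with hsdef
  have hs : (s : R) = P₀.det := rfl
  set w : Rˣ := v₀ * s⁻¹ with hwdef
  have hsinv : (s : R) * ((s⁻¹ : Rˣ) : R) = 1 := Units.mul_inv s
  have hcw : c * (w : R) ^ 2 = (u : R) := by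
    rw [hc_eq, hv₀, Units.val_mul, ← hs]
    linear_combination (A.det * (v₀ : R)^2 * ((s : R) * ((s⁻¹ : Rˣ) : R) + 1)) * hsinv
  set tu : Fin (n+1) → R := fun i => if i = Fin.last n then (u : R) else 1 with htudef
  set P₃ : Matrix (Fin (n+1)) (Fin (n+1)) R :=
    Matrix.diagonal (fun i => if i = Fin.last n then (w : R) else 1) with hP₃def
  have hP₃det : IsUnit P₃.det := by
    rw [hP₃def, Matrix.det_diagonal,
      Finset.prod_ite_eq' Finset.univ (Fin.last n) (fun _ => (w : R))]
    simp
  have hcong3 : Cong (Matrix.diagonal tc) (Matrix.diagonal tu) := by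
    refine ⟨P₃, hP₃det, ?_⟩
    simp only [hP₃def, Matrix.diagonal_transpose, Matrix.diagonal_mul_diagonal]
    refine congrArg Matrix.diagonal ?_
    funext i
    by_cases hi : i = Fin.last n
    · rw [htudef, htcdef]
      simp only [hi, eq_self_iff_true, if_true]
      linear_combination (-1 : R) * hcw
    · rw [htudef, htcdef]
      simp [hi]
  obtain ⟨P, hP, hEq⟩ := Cong.trans (⟨P₀, hP₀, hEq₀⟩ : Cong A (Matrix.diagonal tc)) hcong3
  -- build the basis
  set e : Module.Basis (Fin (n+1)) R M := b.map (Matrix.toLinearEquiv b P hP) with hedef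
  have he : ∀ i, e i = ∑ k, P k i • b k := by
    intro i
    rw [hedef, Module.Basis.map_apply, Matrix.toLinearEquiv_apply, Matrix.toLin_self]
  have hqe : ∀ i j, q (e i) (e j) = (Pᵀ * A * P) i j := by
    intro i j
    rw [he, he]
    rw [Matrix.mul_assoc, Matrix.mul_apply]
    simp only [_root_.map_sum, _root_.map_smul, LinearMap.sum_apply, LinearMap.smul_apply,
      smul_eq_mul, Matrix.transpose_apply, Matrix.mul_apply, Finset.mul_sum, hAdef,
      Matrix.of_apply]
    rw [Finset.sum_comm]
    refine Finset.sum_congr rfl fun k _ => Finset.sum_congr rfl fun l _ => by ring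
  refine ⟨e, ?_, ?_⟩
  · intro i j hij
    rw [hqe, ← hEq]
    rcases eq_or_ne i j with rfl | hne
    · have hone : (if i = i then (1:R) else 0) = 1 := if_pos rfl
      rw [Matrix.diagonal_apply_eq, hone, htudef]
      have hil : i ≠ Fin.last n := by
        intro h
        exact hij (by rw [h])
      show (if i = Fin.last n then (u:R) else 1) = 1
      exact if_neg hil
    · rw [Matrix.diagonal_apply_ne _ hne, if_neg hne]
  · rw [hqe, ← hEq, Matrix.diagonal_apply_eq, htudef]
    show (if Fin.last n = Fin.last n then (u:R) else 1) = u
    exact if_pos rfl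
end

section
/- With R and an R-Θ-semisimple h ∈ GL_n(R) as above (i.e. N(h) = h·ᵗh^{-1} is R-semisimple), let b_h(m₁,m₂) = ᵗm₁ h m₂ and b'_h(m₁,m₂) = ᵗm₁ ᵗh m₂, and let M' = ⊕_λ M'_λ be the eigenspace decomposition for ᵗh^{-1}·h over R'. Then b_h(M'_λ, M'_μ) = 0 = b'_h(M'_λ, M'_μ) unless λμ = 1. -/
open Matrix

/-- `R` is either a field of characteristic `0`, or the ring of integers of a `p`-adic
field with odd residue characteristic. -/
def IsPaperRing (R : Type*) [CommRing R] [IsDomain R] [IsLocalRing R] : Prop :=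
  (IsField R ∧ CharZero R) ∨
  (IsDiscreteValuationRing R ∧ IsAdicComplete (IsLocalRing.maximalIdeal R) R ∧
    Finite (IsLocalRing.ResidueField R) ∧ ringChar (IsLocalRing.ResidueField R) ≠ 2)

/-- A matrix `g` is `R`-semisimple: semisimple as an endomorphism if `R` is a field,
of finite order prime to the residue characteristic if `R` is a `p`-adic integer ring. -/
def IsRSemisimpleMatrix (R : Type*) [CommRing R] [IsLocalRing R] {n : ℕ}
    (g : Matrix (Fin n) (Fin n) R) : Prop :=
  (IsField R ∧ Module.End.IsSemisimple (Matrix.toLin' g)) ∨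
  (∃ k : ℕ, 0 < k ∧ Nat.Coprime k (ringChar (IsLocalRing.ResidueField R)) ∧ g ^ k = 1)

/-- Orthogonality of the eigenspaces of `N_l(h) = ᵗh⁻¹ h` with respect to the bilinear
forms `b_h(x,y) = ᵗx h y` and `b'_h(x,y) = ᵗx ᵗh y`: for eigenvectors `x ∈ M'_λ` and
`y ∈ M'_μ` over the extension `R'`, both forms vanish on `(x,y)` unless `λ μ = 1`.
The eigenvector condition `N_l(h) x = λ x` is expressed equivalently as
`h x = λ ᵗh x`. -/
theorem eigenspaces_orthogonal_for_theta_semisimple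
    {R : Type*} [CommRing R] [IsDomain R] [IsLocalRing R] (hR : IsPaperRing R)
    {n : ℕ} (h : Matrix (Fin n) (Fin n) R) (hinv : IsUnit h)
    (hss : IsRSemisimpleMatrix R ((hᵀ)⁻¹ * h))
    (R' : Type*) [CommRing R'] [IsDomain R'] [Algebra R R']
    (hinj : Function.Injective (algebraMap R R'))
    (lam mu : R') (hlm : lam * mu ≠ 1) (x y : Fin n → R')
    (hx : (h.map (algebraMap R R')) *ᵥ x = lam • ((h.map (algebraMap R R'))ᵀ *ᵥ x))
    (hy : (h.map (algebraMap R R')) *ᵥ y = mu • ((h.map (algebraMap R R'))ᵀ *ᵥ y)) :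
    x ⬝ᵥ ((h.map (algebraMap R R')) *ᵥ y) = 0 ∧
    x ⬝ᵥ ((h.map (algebraMap R R'))ᵀ *ᵥ y) = 0 := by
  set H := h.map (algebraMap R R') with hH
  have hA : x ⬝ᵥ (H *ᵥ y) = mu * (x ⬝ᵥ (Hᵀ *ᵥ y)) := by
    rw [hy, dotProduct_smul, smul_eq_mul]
  have hB : x ⬝ᵥ (Hᵀ *ᵥ y) = lam * (x ⬝ᵥ (H *ᵥ y)) := by
    calc x ⬝ᵥ (Hᵀ *ᵥ y) = (x ᵥ* Hᵀ) ⬝ᵥ y := by rw [dotProduct_mulVec]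
    _ = (H *ᵥ x) ⬝ᵥ y := by rw [vecMul_transpose]
    _ = lam * ((Hᵀ *ᵥ x) ⬝ᵥ y) := by rw [hx, smul_dotProduct, smul_eq_mul]
    _ = lam * ((x ᵥ* H) ⬝ᵥ y) := by rw [mulVec_transpose]
    _ = lam * (x ⬝ᵥ (H *ᵥ y)) := by rw [dotProduct_mulVec]
  have h0 : x ⬝ᵥ (H *ᵥ y) = 0 := by
    have : (1 - lam * mu) * (x ⬝ᵥ (H *ᵥ y)) = 0 := by
      linear_combination hA + mu * hB
    rcases mul_eq_zero.mp this with h1 | h2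
    · exact absurd (by linear_combination -h1) hlm
    · exact h2
  exact ⟨h0, by rw [hB, h0, mul_zero]⟩
end

section
/- Let h ∈ GL_n(R) be R-Θ-semisimple with decomposition h = p + q into skew-symmetric part p and symmetric part q. Then M = R^n decomposes as M = M_+ ⊕ M_- ⊕ M_0 where M_+ = ker p, M_- = ker q, and M_0 is the intersection of the q-orthogonal complement of M_+ with the p-orthogonal complement of M_-; moreover the restrictions q|M_+, p|M_-, q|M_0, p|M_0 are all unimodular. -/
open Matrix

/-- The bilinear form on a submodule `W` induced by `B` is unimodular, i.e. the induced
map `W → W*` is bijective. -/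
def IsUnimodularOn {R M : Type*} [CommRing R] [AddCommGroup M] [Module R M]
    (B : M →ₗ[R] M →ₗ[R] R) (W : Submodule R M) : Prop :=
  Function.Bijective ⇑(LinearMap.domRestrict₁₂ B W W)


section PMZHelpers

open Matrix Polynomial

variable {R : Type*} [CommRing R] {n : ℕ}

private lemma exists_proj' (A : Matrix (Fin n) (Fin n) R) (a : R) (μ : R[X])
    (h0 : aeval A μ = 0)
    (hcase : IsUnit (μ.eval a) ∨ ∃ g : R[X], μ = (X - C a) * g ∧ IsUnit (g.eval a)) :
    ∃ e s : R[X], aeval A e * (A - a • 1) = 0 ∧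
      (A - a • 1) * aeval A s = 1 - aeval A e := by
  have hXa : aeval A (X - C a) = A - a • 1 := by
    rw [map_sub, aeval_X, aeval_C, Algebra.algebraMap_eq_smul_one]
  rcases hcase with hu | ⟨g, hg, hu⟩
  · obtain ⟨b, hb⟩ := hu.exists_right_inv
    obtain ⟨t, ht⟩ := X_sub_C_dvd_sub_C_eval (a := a) (p := μ)
    have hb' : C (μ.eval a) * C b = 1 := by rw [← C_mul, hb, C_1]
    have key : (X - C a) * ((-(C b)) * t) = (-(C b)) * μ + 1 := by
      linear_combination (C b) * ht + hb'
    refine ⟨0, (-(C b)) * t, by simp, ?_⟩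
    rw [← hXa, ← _root_.map_mul, key, map_add, _root_.map_mul, map_neg, aeval_C, h0, mul_zero, zero_add, _root_.map_one, map_zero, sub_zero]
  · obtain ⟨b, hb⟩ := hu.exists_right_inv
    obtain ⟨t, ht⟩ := X_sub_C_dvd_sub_C_eval (a := a) (p := g)
    have hb' : C (g.eval a) * C b = 1 := by rw [← C_mul, hb, C_1]
    refine ⟨C b * g, (-(C b)) * t, ?_, ?_⟩
    · have key : (C b * g) * (X - C a) = C b * μ := by rw [hg]; ring
      rw [← hXa, ← _root_.map_mul, key, _root_.map_mul, aeval_C, h0, mul_zero]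
    · have key : (X - C a) * ((-(C b)) * t) = 1 - C b * g := by
        linear_combination (C b) * ht + hb'
      rw [← hXa, ← _root_.map_mul, key, map_sub, _root_.map_one]

private lemma dot_shift3 (A : Matrix (Fin n) (Fin n) R) (x y : Fin n → R) :
    (A *ᵥ x) ⬝ᵥ y = x ⬝ᵥ (Aᵀ *ᵥ y) := by
  rw [dotProduct_comm, Matrix.dotProduct_mulVec, dotProduct_comm]
  congr 1
  rw [Matrix.mulVec_transpose]

private lemma forall_dot_eq_zero3 {v : Fin n → R} (h : ∀ y, v ⬝ᵥ y = 0) : v = 0 :=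
  funext fun j => by simpa using h (Pi.single j 1)

private lemma mulVec_cancel3 {g : Matrix (Fin n) (Fin n) R} (hg : IsUnit g.det)
    {x : Fin n → R} (h : g *ᵥ x = 0) : x = 0 := by
  have h2 := congrArg (fun v => g⁻¹ *ᵥ v) h
  simpa [Matrix.mulVec_mulVec, Matrix.nonsing_inv_mul g hg] using h2

private lemma linearMap_eq_dot3 (φ : (Fin n → R) →ₗ[R] R) (y : Fin n → R) :
    φ y = (fun j => φ (Pi.single j 1)) ⬝ᵥ y := by
  rw [LinearMap.pi_apply_eq_sum_univ φ y, dotProduct]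
  refine Finset.sum_congr rfl fun j _ => ?_
  have hs : (fun j_1 => if j = j_1 then (1:R) else 0) = Pi.single j 1 :=
    funext fun i => by simp [Pi.single_apply, eq_comm]
  rw [smul_eq_mul, mul_comm, hs]

private lemma unimod_base (g e : Matrix (Fin n) (Fin n) R) (hg : IsUnit g.det)
    (he : e * e = e) (hadj : eᵀ * g = g * e) (W : Submodule R (Fin n → R))
    (hW : ∀ x, x ∈ W ↔ e *ᵥ x = x) :
    IsUnimodularOn (Matrix.toLinearMap₂' R g) W := by
  have hgT : IsUnit (gᵀ).det := by rwa [Matrix.det_transpose]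
  have hmemW : ∀ x, e *ᵥ x ∈ W := fun x =>
    (hW _).mpr (by rw [Matrix.mulVec_mulVec, he])
  have hBapp : ∀ x y, Matrix.toLinearMap₂' R g x y = x ⬝ᵥ (g *ᵥ y) := fun x y =>
    Matrix.toLinearMap₂'_apply' _ _ _
  constructor
  · rw [← LinearMap.ker_eq_bot]
    refine (Submodule.eq_bot_iff _).mpr fun w hw => ?_
    rw [LinearMap.mem_ker] at hw
    have hx' : e *ᵥ (w : Fin n → R) = (w : Fin n → R) := (hW _).mp w.2
    have hall : ∀ y, (w : Fin n → R) ⬝ᵥ (g *ᵥ y) = 0 := by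
      intro y
      have h1 : Matrix.toLinearMap₂' R g (w : Fin n → R) (e *ᵥ y) = 0 := by
        have h2 := congrArg (fun (ψ : W →ₗ[R] R) => ψ ⟨e *ᵥ y, hmemW y⟩) hw
        simpa [LinearMap.domRestrict₁₂_apply] using h2
      calc (w : Fin n → R) ⬝ᵥ (g *ᵥ y)
          = (e *ᵥ (w : Fin n → R)) ⬝ᵥ (g *ᵥ y) := by rw [hx']
        _ = (w : Fin n → R) ⬝ᵥ ((eᵀ * g) *ᵥ y) := by
            rw [dot_shift3, Matrix.mulVec_mulVec]
        _ = (w : Fin n → R) ⬝ᵥ (g *ᵥ (e *ᵥ y)) := by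
            rw [hadj, ← Matrix.mulVec_mulVec]
        _ = 0 := by rw [← hBapp]; exact h1
    have hz : gᵀ *ᵥ (w : Fin n → R) = 0 := by
      apply forall_dot_eq_zero3
      intro y
      rw [dot_shift3, transpose_transpose]
      exact hall y
    exact Subtype.ext (mulVec_cancel3 hgT hz)
  · intro φ
    set φt : (Fin n → R) →ₗ[R] R :=
      φ.comp ((Matrix.toLin' e).codRestrict W (fun x => by
        rw [Matrix.toLin'_apply]; exact hmemW x)) with hφt
    set v : Fin n → R := fun j => φt (Pi.single j 1) with hv
    set x : Fin n → R := (gᵀ)⁻¹ *ᵥ v with hx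
    refine ⟨⟨e *ᵥ x, hmemW x⟩, ?_⟩
    ext w'
    rw [LinearMap.domRestrict₁₂_apply, hBapp]
    have h1 : (e *ᵥ x) ⬝ᵥ (g *ᵥ (w' : Fin n → R)) = x ⬝ᵥ (g *ᵥ (w' : Fin n → R)) := by
      rw [dot_shift3, Matrix.mulVec_mulVec, hadj, ← Matrix.mulVec_mulVec]
      congr 1
      rw [(hW _).mp w'.2]
    rw [h1, Matrix.dotProduct_mulVec, hx]
    have h2 : ((gᵀ)⁻¹ *ᵥ v) ᵥ* g = v := by
      rw [← Matrix.mulVec_transpose, Matrix.mulVec_mulVec, Matrix.mul_nonsing_inv _ hgT,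
        Matrix.one_mulVec]
    rw [h2]
    have h3 : φt (w' : Fin n → R) = φ w' := by
      rw [hφt]
      simp only [LinearMap.comp_apply]
      congr 1
      apply Subtype.ext
      simp only [LinearMap.codRestrict_apply, Matrix.toLin'_apply]
      exact (hW _).mp w'.2
    rw [← h3, linearMap_eq_dot3 φt (w' : Fin n → R), hv]

private lemma unimod_comp (g r ρ : Matrix (Fin n) (Fin n) R) (W : Submodule R (Fin n → R))
    (hrW : ∀ x ∈ W, r *ᵥ x ∈ W) (hρW : ∀ x ∈ W, ρ *ᵥ x ∈ W)
    (hrρ : ∀ x ∈ W, r *ᵥ (ρ *ᵥ x) = x) (hρr : ∀ x ∈ W, ρ *ᵥ (r *ᵥ x) = x)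
    (hbase : IsUnimodularOn (Matrix.toLinearMap₂' R g) W) :
    IsUnimodularOn (Matrix.toLinearMap₂' R (g * r)) W := by
  set Rhat : W →ₗ[R] W := (Matrix.toLin' r).restrict (fun x hx => by
    rw [Matrix.toLin'_apply]; exact hrW x hx) with hRhat
  set Phat : W →ₗ[R] W := (Matrix.toLin' ρ).restrict (fun x hx => by
    rw [Matrix.toLin'_apply]; exact hρW x hx) with hPhat
  have hRhat_apply : ∀ u : W, ((Rhat u : Fin n → R)) = r *ᵥ (u : Fin n → R) := fun u => by
    simp [hRhat, LinearMap.restrict_apply, Matrix.toLin'_apply]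
  have hPhat_apply : ∀ u : W, ((Phat u : Fin n → R)) = ρ *ᵥ (u : Fin n → R) := fun u => by
    simp [hPhat, LinearMap.restrict_apply, Matrix.toLin'_apply]
  have hRP : ∀ u : W, Rhat (Phat u) = u := fun u =>
    Subtype.ext (by rw [hRhat_apply, hPhat_apply]; exact hrρ _ u.2)
  have hPR : ∀ u : W, Phat (Rhat u) = u := fun u =>
    Subtype.ext (by rw [hPhat_apply, hRhat_apply]; exact hρr _ u.2)
  have hF' : ∀ w u : W,
      LinearMap.domRestrict₁₂ (Matrix.toLinearMap₂' R (g * r)) W W w u =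
      LinearMap.domRestrict₁₂ (Matrix.toLinearMap₂' R g) W W w (Rhat u) := by
    intro w u
    rw [LinearMap.domRestrict₁₂_apply, LinearMap.domRestrict₁₂_apply,
      Matrix.toLinearMap₂'_apply', Matrix.toLinearMap₂'_apply', hRhat_apply,
      Matrix.mulVec_mulVec]
  constructor
  · intro w₁ w₂ hww
    apply hbase.injective
    ext u
    calc LinearMap.domRestrict₁₂ (Matrix.toLinearMap₂' R g) W W w₁ u
        = LinearMap.domRestrict₁₂ (Matrix.toLinearMap₂' R g) W W w₁ (Rhat (Phat u)) := by
          rw [hRP]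
      _ = LinearMap.domRestrict₁₂ (Matrix.toLinearMap₂' R (g * r)) W W w₁ (Phat u) := by
          rw [hF']
      _ = LinearMap.domRestrict₁₂ (Matrix.toLinearMap₂' R (g * r)) W W w₂ (Phat u) := by
          rw [hww]
      _ = LinearMap.domRestrict₁₂ (Matrix.toLinearMap₂' R g) W W w₂ (Rhat (Phat u)) := by
          rw [hF']
      _ = LinearMap.domRestrict₁₂ (Matrix.toLinearMap₂' R g) W W w₂ u := by rw [hRP]
  · intro φ
    obtain ⟨w, hw⟩ := hbase.surjective (φ.comp Phat)
    refine ⟨w, ?_⟩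
    ext u
    rw [hF' w u]
    have h2 := congrArg (fun (ψ : W →ₗ[R] R) => ψ (Rhat u)) hw
    simp only [LinearMap.comp_apply] at h2
    rw [h2, hPR u]

private lemma aeval_transpose4 (A : Matrix (Fin n) (Fin n) R) (p : R[X]) :
    (aeval A p)ᵀ = aeval Aᵀ p := by
  induction p using Polynomial.induction_on' with
  | add f g hf hg => rw [map_add, map_add, transpose_add, hf, hg]
  | monomial k c =>
      rw [aeval_monomial, aeval_monomial, transpose_mul, transpose_pow]
      rw [show ((algebraMap R (Matrix (Fin n) (Fin n) R)) c)ᵀ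
          = algebraMap R (Matrix (Fin n) (Fin n) R) c by
        simp [Matrix.algebraMap_eq_diagonal, Matrix.diagonal_transpose]]
      exact (Algebra.commutes c _).symm

private lemma conj_aeval4 (g B : Matrix (Fin n) (Fin n) R) (hg : IsUnit g.det) (p : R[X]) :
    g⁻¹ * aeval B p * g = aeval (g⁻¹ * B * g) p := by
  induction p using Polynomial.induction_on' with
  | add f q hf hq => rw [map_add, map_add, mul_add, add_mul, hf, hq]
  | monomial k c =>
      have hpow : (g⁻¹ * B * g) ^ k = g⁻¹ * B ^ k * g := by
        induction k with
        | zero => simp [Matrix.nonsing_inv_mul g hg]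
        | succ m ih =>
            rw [pow_succ, pow_succ, ih]
            calc g⁻¹ * B ^ m * g * (g⁻¹ * B * g)
                = g⁻¹ * B ^ m * (g * g⁻¹) * B * g := by
                  simp only [Matrix.mul_assoc]
              _ = g⁻¹ * (B ^ m * B) * g := by
                  rw [Matrix.mul_nonsing_inv g hg]
                  simp only [Matrix.mul_assoc, Matrix.one_mul, Matrix.mul_one]
      rw [aeval_monomial, aeval_monomial, hpow, ← mul_assoc, ← mul_assoc,
        ← Algebra.commutes c (g⁻¹)]
      simp only [mul_assoc]

private lemma selfadj (h γ δ : Matrix (Fin n) (Fin n) R) (hdet : IsUnit h.det)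
    (hγδ : γ * δ = 1) (hδγ : δ * γ = 1)
    (hconj : h⁻¹ * γᵀ * h = δ)
    (D : R[X]) (hD : aeval γ D = δ)
    (ε : R) (hε : ε * ε = 1)
    (P S : R[X])
    (hP : aeval γ P * (γ - ε • 1) = 0)
    (hS : (γ - ε • 1) * aeval γ S = 1 - aeval γ P) :
    (aeval γ P)ᵀ * h = h * aeval γ P := by
  have hcomm : ∀ p q : R[X], aeval γ p * aeval γ q = aeval γ q * aeval γ p := fun p q => by
    rw [← _root_.map_mul, mul_comm, _root_.map_mul]
  have hcommγ : ∀ p : R[X], γ * aeval γ p = aeval γ p * γ := fun p => by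
    have h1 := hcomm X p
    rwa [aeval_X] at h1
  have hcommδ : ∀ p : R[X], δ * aeval γ p = aeval γ p * δ := fun p => by
    have h1 := hcomm D p
    rwa [hD] at h1
  have conjP : ∀ p : R[X], h⁻¹ * (aeval γ p)ᵀ * h = aeval γ (p.comp D) := by
    intro p
    rw [aeval_transpose4, conj_aeval4 h γᵀ hdet, hconj, aeval_comp, hD]
  have hhinv : h * h⁻¹ = 1 := Matrix.mul_nonsing_inv h hdet
  have hinvh : h⁻¹ * h = 1 := Matrix.nonsing_inv_mul h hdet
  have hconjγ : h⁻¹ * (γᵀ - ε • 1) * h = δ - ε • 1 := by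
    rw [mul_sub, sub_mul, hconj]
    congr 1
    rw [mul_smul_comm, smul_mul_assoc, mul_one, hinvh]
  have h1 : (δ - ε • 1) * aeval γ (P.comp D) = 0 := by
    have h2 := congrArg transpose hP
    simp only [transpose_mul, transpose_sub, transpose_smul, transpose_one,
      transpose_zero] at h2
    calc (δ - ε • 1) * aeval γ (P.comp D)
        = (h⁻¹ * (γᵀ - ε • 1) * h) * (h⁻¹ * (aeval γ P)ᵀ * h) := by rw [hconjγ, conjP P]
      _ = h⁻¹ * ((γᵀ - ε • 1) * ((h * h⁻¹) * (aeval γ P)ᵀ)) * h := by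
          simp only [Matrix.mul_assoc]
      _ = h⁻¹ * ((γᵀ - ε • 1) * (aeval γ P)ᵀ) * h := by rw [hhinv, Matrix.one_mul]
      _ = 0 := by rw [h2, mul_zero, zero_mul]
  have h3 : aeval γ (S.comp D) * (δ - ε • 1) = 1 - aeval γ (P.comp D) := by
    have h2 := congrArg transpose hS
    simp only [transpose_mul, transpose_sub, transpose_smul, transpose_one] at h2
    calc aeval γ (S.comp D) * (δ - ε • 1)
        = (h⁻¹ * (aeval γ S)ᵀ * h) * (h⁻¹ * (γᵀ - ε • 1) * h) := by rw [hconjγ, conjP S]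
      _ = h⁻¹ * ((aeval γ S)ᵀ * ((h * h⁻¹) * (γᵀ - ε • 1))) * h := by
          simp only [Matrix.mul_assoc]
      _ = h⁻¹ * ((aeval γ S)ᵀ * (γᵀ - ε • 1)) * h := by rw [hhinv, Matrix.one_mul]
      _ = h⁻¹ * (1 - (aeval γ P)ᵀ) * h := by rw [h2]
      _ = 1 - aeval γ (P.comp D) := by
          rw [mul_sub, mul_one, sub_mul, hinvh, conjP P]
  have hkey1 : (-ε) • (γ * (δ - ε • 1)) = γ - ε • 1 := by
    have hin : γ * (δ - ε • 1) = 1 - ε • γ := by rw [mul_sub, hγδ, mul_smul_comm, mul_one]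
    rw [hin, smul_sub, smul_smul, neg_mul, hε, neg_smul, neg_smul, one_smul]
    abel
  have hkey2 : (-ε) • (δ * (γ - ε • 1)) = δ - ε • 1 := by
    have hin : δ * (γ - ε • 1) = 1 - ε • δ := by rw [mul_sub, hδγ, mul_smul_comm, mul_one]
    rw [hin, smul_sub, smul_smul, neg_mul, hε, neg_smul, neg_smul, one_smul]
    abel
  have h4 : (γ - ε • 1) * aeval γ (P.comp D) = 0 := by
    rw [← hkey1, smul_mul_assoc, mul_assoc, h1, mul_zero, smul_zero]
  have hcet : ∀ q : R[X], aeval γ q * (γ - ε • 1) = (γ - ε • 1) * aeval γ q := by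
    intro q
    rw [mul_sub, sub_mul, hcommγ q, mul_smul_comm, smul_mul_assoc, mul_one, one_mul]
  have h5 : aeval γ (P.comp D) * (1 - aeval γ P) = 0 := by
    rw [← hS, ← mul_assoc, hcet (P.comp D), mul_assoc, ← mul_assoc, h4, zero_mul]
  have u1 : aeval γ (P.comp D) = aeval γ (P.comp D) * aeval γ P := by
    rw [mul_sub, mul_one, sub_eq_zero] at h5
    exact h5
  have h6 : aeval γ P * (1 - aeval γ (P.comp D)) = 0 := by
    rw [← h3, ← mul_assoc, hcomm P (S.comp D), mul_assoc, ← hkey2, mul_smul_comm,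
      ← mul_assoc, ← hcommδ P, mul_assoc, hP, mul_zero, smul_zero, mul_zero]
  have u2 : aeval γ P = aeval γ P * aeval γ (P.comp D) := by
    rw [mul_sub, mul_one, sub_eq_zero] at h6
    exact h6
  have hPE : aeval γ (P.comp D) = aeval γ P := by
    rw [u1, hcomm (P.comp D) P, ← u2]
  have h7 : h⁻¹ * (aeval γ P)ᵀ * h = aeval γ P := by rw [conjP P, hPE]
  calc (aeval γ P)ᵀ * h = (h * h⁻¹) * ((aeval γ P)ᵀ * h) := by rw [hhinv, one_mul]
    _ = h * (h⁻¹ * (aeval γ P)ᵀ * h) := by simp only [Matrix.mul_assoc]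
    _ = h * aeval γ P := by rw [h7]

private lemma internal3 (e f g0 : Matrix (Fin n) (Fin n) R)
    (A B C : Submodule R (Fin n → R))
    (hA : ∀ x, x ∈ A ↔ e *ᵥ x = x)
    (hB : ∀ x, x ∈ B ↔ f *ᵥ x = x)
    (hC : ∀ x, x ∈ C ↔ g0 *ᵥ x = x)
    (hee : e * e = e) (hff : f * f = f) (hgg : g0 * g0 = g0)
    (hef : e * f = 0) (heg : e * g0 = 0)
    (hfe : f * e = 0) (hfg : f * g0 = 0)
    (hge : g0 * e = 0) (hgf : g0 * f = 0)
    (hsum : ∀ x : Fin n → R, e *ᵥ x + (f *ᵥ x + g0 *ᵥ x) = x) :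
    DirectSum.IsInternal ![A, B, C] := by
  apply DirectSum.isInternal_submodule_of_iSupIndep_of_iSup_eq_top
  · intro i
    have hproj : ∃ g' : Matrix (Fin n) (Fin n) R,
        (∀ x ∈ (![A, B, C]) i, g' *ᵥ x = x) ∧
        (∀ j, j ≠ i → ∀ x ∈ (![A, B, C]) j, g' *ᵥ x = 0) := by
      fin_cases i
      · refine ⟨e, fun x hx => (hA x).mp hx, ?_⟩
        intro j hj x hx
        fin_cases j
        · exact absurd rfl hj
        · rw [← (hB x).mp hx, Matrix.mulVec_mulVec, hef, Matrix.zero_mulVec]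
        · rw [← (hC x).mp hx, Matrix.mulVec_mulVec, heg, Matrix.zero_mulVec]
      · refine ⟨f, fun x hx => (hB x).mp hx, ?_⟩
        intro j hj x hx
        fin_cases j
        · rw [← (hA x).mp hx, Matrix.mulVec_mulVec, hfe, Matrix.zero_mulVec]
        · exact absurd rfl hj
        · rw [← (hC x).mp hx, Matrix.mulVec_mulVec, hfg, Matrix.zero_mulVec]
      · refine ⟨g0, fun x hx => (hC x).mp hx, ?_⟩
        intro j hj x hx
        fin_cases j
        · rw [← (hA x).mp hx, Matrix.mulVec_mulVec, hge, Matrix.zero_mulVec]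
        · rw [← (hB x).mp hx, Matrix.mulVec_mulVec, hgf, Matrix.zero_mulVec]
        · exact absurd rfl hj
    obtain ⟨g', hgi, hgj⟩ := hproj
    rw [Submodule.disjoint_def]
    intro x hxi hxsup
    have hxker : g' *ᵥ x = 0 := by
      have hle : (⨆ j, ⨆ (_ : j ≠ i), (![A, B, C]) j) ≤
          LinearMap.ker (Matrix.toLin' g') := by
        refine iSup_le fun j => iSup_le fun hj => ?_
        intro y hy
        rw [LinearMap.mem_ker, Matrix.toLin'_apply]
        exact hgj j hj y hy
      have h4 := hle hxsup
      rwa [LinearMap.mem_ker, Matrix.toLin'_apply] at h4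
    rw [← hgi x hxi, hxker]
  · rw [eq_top_iff]
    intro x _
    have hx1 : e *ᵥ x ∈ A := (hA _).mpr (by rw [Matrix.mulVec_mulVec, hee])
    have hx2 : f *ᵥ x ∈ B := (hB _).mpr (by rw [Matrix.mulVec_mulVec, hff])
    have hx3 : g0 *ᵥ x ∈ C := (hC _).mpr (by rw [Matrix.mulVec_mulVec, hgg])
    have hmem : x ∈ A ⊔ (B ⊔ C) := by
      rw [← hsum x]
      exact Submodule.add_mem_sup hx1 (Submodule.add_mem_sup hx2 hx3)
    exact (sup_le (le_iSup (![A, B, C]) 0)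
      (sup_le (le_iSup (![A, B, C]) 1)
        (le_iSup (![A, B, C]) 2))) hmem

set_option maxHeartbeats 1000000 in
private lemma master
    (h pm qm γ δ : Matrix (Fin n) (Fin n) R)
    (h2 : IsUnit (2 : R))
    (hdet : IsUnit h.det)
    (hγ : γ = (hᵀ)⁻¹ * h) (hδ : δ = h⁻¹ * hᵀ)
    (hsum : h = pm + qm) (hskew : pmᵀ = -pm) (hsymm : qmᵀ = qm)
    (P S Pm Sm D : R[X])
    (hP : aeval γ P * (γ - 1) = 0) (hS : (γ - 1) * aeval γ S = 1 - aeval γ P)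
    (hPm : aeval γ Pm * (γ + 1) = 0) (hSm : (γ + 1) * aeval γ Sm = 1 - aeval γ Pm)
    (hD : aeval γ D = δ) :
    ∀ (Bp Bq : (Fin n → R) →ₗ[R] (Fin n → R) →ₗ[R] R),
      Bp = Matrix.toLinearMap₂' R pm → Bq = Matrix.toLinearMap₂' R qm →
    ∀ (Mplus Mminus M0 : Submodule R (Fin n → R)),
      Mplus = LinearMap.ker (Matrix.toLin' pm) →
      Mminus = LinearMap.ker (Matrix.toLin' qm) →
      M0 = (Mplus.orthogonalBilin Bq) ⊓ (Mminus.orthogonalBilin Bp) →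
      DirectSum.IsInternal ![Mplus, Mminus, M0] ∧
      IsUnimodularOn Bq Mplus ∧ IsUnimodularOn Bp Mminus ∧
      IsUnimodularOn Bq M0 ∧ IsUnimodularOn Bp M0 := by
  have hdetT : IsUnit (hᵀ).det := by rwa [Matrix.det_transpose]
  have hhinv : h * h⁻¹ = 1 := Matrix.mul_nonsing_inv h hdet
  have hinvh : h⁻¹ * h = 1 := Matrix.nonsing_inv_mul h hdet
  have hThinv : hᵀ * (hᵀ)⁻¹ = 1 := Matrix.mul_nonsing_inv _ hdetT
  have hinvhT : (hᵀ)⁻¹ * hᵀ = 1 := Matrix.nonsing_inv_mul _ hdetT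
  obtain ⟨binv, hbinv⟩ := h2.exists_right_inv
  have hb2 : binv * 2 = 1 := by rw [mul_comm]; exact hbinv
  have hcan : ∀ A B : Matrix (Fin n) (Fin n) R, (2:R) • A = (2:R) • B → A = B := by
    intro A B hAB
    calc A = (binv * 2) • A := by rw [hb2, one_smul]
      _ = binv • ((2:R) • A) := by rw [mul_smul]
      _ = binv • ((2:R) • B) := by rw [hAB]
      _ = (binv * 2) • B := by rw [mul_smul]
      _ = B := by rw [hb2, one_smul]
  have hTγ : hᵀ * γ = h := by rw [hγ, ← mul_assoc, hThinv, one_mul]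
  have hγδ : γ * δ = 1 := by
    rw [hγ, hδ, mul_assoc, ← mul_assoc h h⁻¹ hᵀ, hhinv, one_mul, hinvhT]
  have hδγ : δ * γ = 1 := by
    rw [hγ, hδ, mul_assoc, ← mul_assoc hᵀ _ _, hThinv, one_mul, hinvh]
  have hp2 : (2:R) • pm = h - hᵀ := by
    rw [hsum, transpose_add, hskew, hsymm, two_smul]; abel
  have hq2 : (2:R) • qm = h + hᵀ := by
    rw [hsum, transpose_add, hskew, hsymm, two_smul]; abel
  have hγp : hᵀ * (γ - 1) = (2:R) • pm := by rw [mul_sub, hTγ, mul_one, hp2]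
  have hγq : hᵀ * (γ + 1) = (2:R) • qm := by rw [mul_add, hTγ, mul_one, hq2]
  have hconj : h⁻¹ * γᵀ * h = δ := by
    rw [hγ, transpose_mul, Matrix.transpose_nonsing_inv, transpose_transpose, hδ,
      ← mul_assoc, mul_assoc (h⁻¹ * hᵀ) _ _, hinvh, mul_one]
  have hcomm : ∀ p q : R[X], aeval γ p * aeval γ q = aeval γ q * aeval γ p := fun p q => by
    rw [← _root_.map_mul, mul_comm, _root_.map_mul]
  have hcommγ : ∀ p : R[X], γ * aeval γ p = aeval γ p * γ := fun p => by
    have h1 := hcomm X p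
    rwa [aeval_X] at h1
  have hcommδ : ∀ p : R[X], δ * aeval γ p = aeval γ p * δ := fun p => by
    have h1 := hcomm D p
    rwa [hD] at h1
  -- basic action identities
  have hγe : γ * aeval γ P = aeval γ P := by
    have h1 : aeval γ P * γ = aeval γ P := by
      have h3 := hP; rwa [mul_sub, mul_one, sub_eq_zero] at h3
    rw [hcommγ P, h1]
  have hγf : γ * aeval γ Pm = -(aeval γ Pm) := by
    have h1 : aeval γ Pm * γ = -(aeval γ Pm) := by
      have h3 := hPm; rw [mul_add, mul_one] at h3
      exact eq_neg_of_add_eq_zero_left h3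
    rw [hcommγ Pm, h1]
  have hδe : δ * aeval γ P = aeval γ P := by
    conv_lhs => rw [← hγe]
    rw [← mul_assoc, hδγ, one_mul]
  have hδf : δ * aeval γ Pm = -(aeval γ Pm) := by
    have h1 : δ * (γ * aeval γ Pm) = aeval γ Pm := by rw [← mul_assoc, hδγ, one_mul]
    rw [hγf, mul_neg] at h1
    exact neg_eq_iff_eq_neg.mp h1
  -- idempotents
  have hee : aeval γ P * aeval γ P = aeval γ P := by
    have h5 : aeval γ P * (1 - aeval γ P) = 0 := by
      rw [← hS, ← mul_assoc, hP, zero_mul]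
    rw [mul_sub, mul_one, sub_eq_zero] at h5
    exact h5.symm
  have hff : aeval γ Pm * aeval γ Pm = aeval γ Pm := by
    have h5 : aeval γ Pm * (1 - aeval γ Pm) = 0 := by
      rw [← hSm, ← mul_assoc, hPm, zero_mul]
    rw [mul_sub, mul_one, sub_eq_zero] at h5
    exact h5.symm
  have hef : aeval γ P * aeval γ Pm = 0 := by
    have hfγ : aeval γ Pm * γ = -(aeval γ Pm) := by rw [← hcommγ Pm, hγf]
    have heγ : aeval γ P * γ = aeval γ P := by rw [← hcommγ P, hγe]
    have hA : aeval γ P * aeval γ Pm * γ = -(aeval γ P * aeval γ Pm) := by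
      rw [mul_assoc, hfγ, mul_neg]
    have hB : aeval γ P * aeval γ Pm * γ = aeval γ P * aeval γ Pm := by
      rw [hcomm P Pm, mul_assoc, heγ]
    have hC : aeval γ P * aeval γ Pm + aeval γ P * aeval γ Pm = 0 := by
      nth_rewrite 1 [← hB]
      rw [hA, neg_add_cancel]
    apply hcan
    rw [two_smul, hC, smul_zero]
  have hfe : aeval γ Pm * aeval γ P = 0 := by rw [hcomm Pm P, hef]
  have hE0x : aeval γ (1 - P - Pm) = 1 - aeval γ P - aeval γ Pm := by
    rw [map_sub, map_sub, _root_.map_one]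
  have hE0e : aeval γ (1 - P - Pm) * aeval γ P = 0 := by
    rw [hE0x, sub_mul, sub_mul, one_mul, hee, hfe, sub_self, zero_sub, neg_zero]
  have hE0f : aeval γ (1 - P - Pm) * aeval γ Pm = 0 := by
    rw [hE0x, sub_mul, sub_mul, one_mul, hef, hff, sub_zero, sub_self]
  have heE0 : aeval γ P * aeval γ (1 - P - Pm) = 0 := by rw [hcomm P, hE0e]
  have hfE0 : aeval γ Pm * aeval γ (1 - P - Pm) = 0 := by rw [hcomm Pm, hE0f]
  have hE0E0 : aeval γ (1 - P - Pm) * aeval γ (1 - P - Pm) = aeval γ (1 - P - Pm) := by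
    nth_rewrite 2 [hE0x]
    rw [mul_sub, mul_sub, mul_one, hE0e, hE0f, sub_zero, sub_zero]
  -- self-adjointness
  have hPone : aeval γ P * (γ - (1:R) • 1) = 0 := by rwa [one_smul]
  have hSone : (γ - (1:R) • 1) * aeval γ S = 1 - aeval γ P := by rwa [one_smul]
  have heT : (aeval γ P)ᵀ * h = h * aeval γ P :=
    selfadj h γ δ hdet hγδ hδγ hconj D hD 1 (mul_one 1) P S hPone hSone
  have hPm' : aeval γ Pm * (γ - (-1:R) • 1) = 0 := by
    rw [neg_smul, one_smul, sub_neg_eq_add]; exact hPm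
  have hSm' : (γ - (-1:R) • 1) * aeval γ Sm = 1 - aeval γ Pm := by
    rw [neg_smul, one_smul, sub_neg_eq_add]; exact hSm
  have hfT : (aeval γ Pm)ᵀ * h = h * aeval γ Pm :=
    selfadj h γ δ hdet hγδ hδγ hconj D hD (-1) (by ring) Pm Sm hPm' hSm'
  have hE0T : (aeval γ (1 - P - Pm))ᵀ * h = h * aeval γ (1 - P - Pm) := by
    rw [hE0x, transpose_sub, transpose_sub, transpose_one, sub_mul, sub_mul, one_mul,
      mul_sub, mul_sub, mul_one, heT, hfT]
  have hadj2 : ∀ A : Matrix (Fin n) (Fin n) R, Aᵀ * h = h * A →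
      (Aᵀ * qm = qm * A ∧ Aᵀ * pm = pm * A) := by
    intro A hA
    have hAT : Aᵀ * hᵀ = hᵀ * A := by
      have h3 := congrArg transpose hA
      rw [transpose_mul, transpose_mul, transpose_transpose] at h3
      exact h3.symm
    constructor
    · apply hcan
      calc (2:R) • (Aᵀ * qm) = Aᵀ * ((2:R) • qm) := (mul_smul_comm 2 Aᵀ qm).symm
        _ = Aᵀ * h + Aᵀ * hᵀ := by rw [hq2, mul_add]
        _ = h * A + hᵀ * A := by rw [hA, hAT]
        _ = ((2:R) • qm) * A := by rw [hq2, add_mul]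
        _ = (2:R) • (qm * A) := smul_mul_assoc 2 qm A
    · apply hcan
      calc (2:R) • (Aᵀ * pm) = Aᵀ * ((2:R) • pm) := (mul_smul_comm 2 Aᵀ pm).symm
        _ = Aᵀ * h - Aᵀ * hᵀ := by rw [hp2, mul_sub]
        _ = h * A - hᵀ * A := by rw [hA, hAT]
        _ = ((2:R) • pm) * A := by rw [hp2, sub_mul]
        _ = (2:R) • (pm * A) := smul_mul_assoc 2 pm A
  have heq := (hadj2 _ heT).1
  have hfp := (hadj2 _ hfT).2
  have hE0q := (hadj2 _ hE0T).1
  have hE0p := (hadj2 _ hE0T).2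
  -- products with pm/qm
  have hγ1e : (γ - 1) * aeval γ P = 0 := by rw [sub_mul, hγe, one_mul, sub_self]
  have hγ1f : (γ + 1) * aeval γ Pm = 0 := by rw [add_mul, hγf, one_mul, neg_add_cancel]
  have hpme : pm * aeval γ P = 0 := by
    apply hcan
    rw [smul_zero]
    calc (2:R) • (pm * aeval γ P) = ((2:R) • pm) * aeval γ P := (smul_mul_assoc _ _ _).symm
      _ = hᵀ * ((γ - 1) * aeval γ P) := by rw [← hγp, mul_assoc]
      _ = 0 := by rw [hγ1e, mul_zero]
  have hqmf : qm * aeval γ Pm = 0 := by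
    apply hcan
    rw [smul_zero]
    calc (2:R) • (qm * aeval γ Pm) = ((2:R) • qm) * aeval γ Pm := (smul_mul_assoc _ _ _).symm
      _ = hᵀ * ((γ + 1) * aeval γ Pm) := by rw [← hγq, mul_assoc]
      _ = 0 := by rw [hγ1f, mul_zero]
  have hqme : qm * aeval γ P = hᵀ * aeval γ P := by
    apply hcan
    have hx1 : (γ + 1) * aeval γ P = (2:R) • aeval γ P := by
      rw [add_mul, hγe, one_mul, two_smul]
    calc (2:R) • (qm * aeval γ P) = ((2:R) • qm) * aeval γ P := (smul_mul_assoc _ _ _).symm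
      _ = hᵀ * ((γ + 1) * aeval γ P) := by rw [← hγq, mul_assoc]
      _ = hᵀ * ((2:R) • aeval γ P) := by rw [hx1]
      _ = (2:R) • (hᵀ * aeval γ P) := mul_smul_comm _ _ _
  have hpmf : pm * aeval γ Pm = -(hᵀ * aeval γ Pm) := by
    apply hcan
    have hx1 : (γ - 1) * aeval γ Pm = (2:R) • (-(aeval γ Pm)) := by
      rw [sub_mul, hγf, one_mul, two_smul]
      abel
    calc (2:R) • (pm * aeval γ Pm) = ((2:R) • pm) * aeval γ Pm := (smul_mul_assoc _ _ _).symm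
      _ = hᵀ * ((γ - 1) * aeval γ Pm) := by rw [← hγp, mul_assoc]
      _ = hᵀ * ((2:R) • (-(aeval γ Pm))) := by rw [hx1]
      _ = (2:R) • (hᵀ * -(aeval γ Pm)) := mul_smul_comm _ _ _
      _ = (2:R) • (-(hᵀ * aeval γ Pm)) := by rw [mul_neg]
  -- swap helpers
  have hswap1 : ∀ q : R[X], (γ - 1) * aeval γ q = aeval γ q * (γ - 1) := fun q => by
    rw [sub_mul, mul_sub, hcommγ q, one_mul, mul_one]
  have hswap2 : ∀ q : R[X], (γ + 1) * aeval γ q = aeval γ q * (γ + 1) := fun q => by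
    rw [add_mul, mul_add, hcommγ q, one_mul, mul_one]
  -- kernels
  have hker_p : ∀ x : Fin n → R, pm *ᵥ x = 0 ↔ aeval γ P *ᵥ x = x := by
    intro x
    constructor
    · intro hx
      have h1 : hᵀ *ᵥ ((γ - 1) *ᵥ x) = 0 := by
        rw [Matrix.mulVec_mulVec, hγp, Matrix.smul_mulVec, hx, smul_zero]
      have hzz : (γ - 1) *ᵥ x = 0 := mulVec_cancel3 hdetT h1
      have h3 : (1 - aeval γ P) *ᵥ x = 0 := by
        rw [← hS, hswap1 S, ← Matrix.mulVec_mulVec, hzz, Matrix.mulVec_zero]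
      rwa [Matrix.sub_mulVec, Matrix.one_mulVec, sub_eq_zero, eq_comm] at h3
    · intro hx
      conv_lhs => rw [← hx]
      rw [Matrix.mulVec_mulVec, hpme, Matrix.zero_mulVec]
  have hker_q : ∀ x : Fin n → R, qm *ᵥ x = 0 ↔ aeval γ Pm *ᵥ x = x := by
    intro x
    constructor
    · intro hx
      have h1 : hᵀ *ᵥ ((γ + 1) *ᵥ x) = 0 := by
        rw [Matrix.mulVec_mulVec, hγq, Matrix.smul_mulVec, hx, smul_zero]
      have hzz : (γ + 1) *ᵥ x = 0 := mulVec_cancel3 hdetT h1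
      have h3 : (1 - aeval γ Pm) *ᵥ x = 0 := by
        rw [← hSm, hswap2 Sm, ← Matrix.mulVec_mulVec, hzz, Matrix.mulVec_zero]
      rwa [Matrix.sub_mulVec, Matrix.one_mulVec, sub_eq_zero, eq_comm] at h3
    · intro hx
      conv_lhs => rw [← hx]
      rw [Matrix.mulVec_mulVec, hqmf, Matrix.zero_mulVec]
  -- r matrices
  have hq_fact : h * (h⁻¹ * qm) = qm := by rw [← mul_assoc, hhinv, one_mul]
  have hp_fact : h * (h⁻¹ * pm) = pm := by rw [← mul_assoc, hhinv, one_mul]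
  have hrq2 : (2:R) • (h⁻¹ * qm) = 1 + δ := by
    rw [← mul_smul_comm, hq2, mul_add, hinvh, ← hδ]
  have hrp2 : (2:R) • (h⁻¹ * pm) = 1 - δ := by
    rw [← mul_smul_comm, hp2, mul_sub, hinvh, ← hδ]
  have hrq_e : (h⁻¹ * qm) * aeval γ P = aeval γ P := by
    apply hcan
    calc (2:R) • ((h⁻¹ * qm) * aeval γ P)
        = ((2:R) • (h⁻¹ * qm)) * aeval γ P := (smul_mul_assoc _ _ _).symm
      _ = aeval γ P + aeval γ P := by rw [hrq2, add_mul, one_mul, hδe]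
      _ = (2:R) • aeval γ P := (two_smul R _).symm
  have hrp_f : (h⁻¹ * pm) * aeval γ Pm = aeval γ Pm := by
    apply hcan
    calc (2:R) • ((h⁻¹ * pm) * aeval γ Pm)
        = ((2:R) • (h⁻¹ * pm)) * aeval γ Pm := (smul_mul_assoc _ _ _).symm
      _ = aeval γ Pm - -(aeval γ Pm) := by rw [hrp2, sub_mul, one_mul, hδf]
      _ = (2:R) • aeval γ Pm := by rw [sub_neg_eq_add, two_smul]
  have hcommδE0 : δ * aeval γ (1 - P - Pm) = aeval γ (1 - P - Pm) * δ := hcommδ _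
  have hrqE0 : (h⁻¹ * qm) * aeval γ (1 - P - Pm) = aeval γ (1 - P - Pm) * (h⁻¹ * qm) := by
    apply hcan
    calc (2:R) • ((h⁻¹ * qm) * aeval γ (1 - P - Pm))
        = ((2:R) • (h⁻¹ * qm)) * aeval γ (1 - P - Pm) := (smul_mul_assoc _ _ _).symm
      _ = (1 + δ) * aeval γ (1 - P - Pm) := by rw [hrq2]
      _ = aeval γ (1 - P - Pm) * (1 + δ) := by
          rw [add_mul, mul_add, one_mul, mul_one, hcommδE0]
      _ = aeval γ (1 - P - Pm) * ((2:R) • (h⁻¹ * qm)) := by rw [hrq2]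
      _ = (2:R) • (aeval γ (1 - P - Pm) * (h⁻¹ * qm)) := mul_smul_comm _ _ _
  have hrpE0 : (h⁻¹ * pm) * aeval γ (1 - P - Pm) = aeval γ (1 - P - Pm) * (h⁻¹ * pm) := by
    apply hcan
    calc (2:R) • ((h⁻¹ * pm) * aeval γ (1 - P - Pm))
        = ((2:R) • (h⁻¹ * pm)) * aeval γ (1 - P - Pm) := (smul_mul_assoc _ _ _).symm
      _ = (1 - δ) * aeval γ (1 - P - Pm) := by rw [hrp2]
      _ = aeval γ (1 - P - Pm) * (1 - δ) := by
          rw [sub_mul, mul_sub, one_mul, mul_one, hcommδE0]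
      _ = aeval γ (1 - P - Pm) * ((2:R) • (h⁻¹ * pm)) := by rw [hrp2]
      _ = (2:R) • (aeval γ (1 - P - Pm) * (h⁻¹ * pm)) := mul_smul_comm _ _ _
  -- the w matrix and invertibility of γ ± 1 on M0
  have hwx : aeval γ ((1 - P - Pm) * (S * Sm)) =
      aeval γ (1 - P - Pm) * (aeval γ S * aeval γ Sm) := by
    rw [_root_.map_mul, _root_.map_mul]
  have hx1ef : ((1:Matrix (Fin n) (Fin n) R) - aeval γ P) * (1 - aeval γ Pm)
      = 1 - aeval γ P - aeval γ Pm := by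
    rw [mul_sub, mul_one, sub_mul, one_mul, hef, sub_zero]
  have hgw : (γ * γ - 1) * aeval γ ((1 - P - Pm) * (S * Sm)) = aeval γ (1 - P - Pm) := by
    have hpoly : ((X * X - 1) * ((1 - P - Pm) * (S * Sm)) : R[X]) =
        (1 - P - Pm) * (((X - 1) * S) * ((X + 1) * Sm)) := by ring
    have h3 := congrArg (aeval γ) hpoly
    simp only [_root_.map_mul, map_sub, map_add, _root_.map_one, aeval_X] at h3
    rw [← hE0x, ← hwx, hS, hSm, hx1ef, ← hE0x, hE0E0] at h3
    exact h3
  set pw : R[X] := (1 - P - Pm) * (S * Sm) with hpw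
  set pρq : R[X] := X * ((X - 1) * pw) with hpρq
  set pρp : R[X] := X * ((X + 1) * pw) with hpρp
  have hρq_eval : aeval γ pρq = γ * ((γ - 1) * aeval γ pw) := by
    rw [hpρq, _root_.map_mul, _root_.map_mul, map_sub, aeval_X, _root_.map_one]
  have hρp_eval : aeval γ pρp = γ * ((γ + 1) * aeval γ pw) := by
    rw [hpρp, _root_.map_mul, _root_.map_mul, map_add, aeval_X, _root_.map_one]
  have hsq : (γ + 1) * (γ - 1) = γ * γ - 1 := by noncomm_ring
  have hsq' : (γ - 1) * (γ + 1) = γ * γ - 1 := by noncomm_ring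
  have hrqρ : (h⁻¹ * qm) * ((2:R) • aeval γ pρq) = aeval γ (1 - P - Pm) := by
    apply hcan
    calc (2:R) • ((h⁻¹ * qm) * ((2:R) • aeval γ pρq))
        = ((2:R) • (h⁻¹ * qm)) * ((2:R) • aeval γ pρq) := (smul_mul_assoc _ _ _).symm
      _ = (2:R) • ((1 + δ) * aeval γ pρq) := by rw [hrq2, mul_smul_comm]
      _ = (2:R) • (((1 + δ) * γ) * ((γ - 1) * aeval γ pw)) := by
          rw [hρq_eval, ← mul_assoc]
      _ = (2:R) • ((γ + 1) * ((γ - 1) * aeval γ pw)) := by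
          rw [add_mul, one_mul, hδγ, add_comm γ 1]
      _ = (2:R) • ((γ * γ - 1) * aeval γ pw) := by rw [← mul_assoc, hsq]
      _ = (2:R) • aeval γ (1 - P - Pm) := by rw [hgw]
  have hrpρ : (h⁻¹ * pm) * ((2:R) • aeval γ pρp) = aeval γ (1 - P - Pm) := by
    apply hcan
    calc (2:R) • ((h⁻¹ * pm) * ((2:R) • aeval γ pρp))
        = ((2:R) • (h⁻¹ * pm)) * ((2:R) • aeval γ pρp) := (smul_mul_assoc _ _ _).symm
      _ = (2:R) • ((1 - δ) * aeval γ pρp) := by rw [hrp2, mul_smul_comm]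
      _ = (2:R) • (((1 - δ) * γ) * ((γ + 1) * aeval γ pw)) := by
          rw [hρp_eval, ← mul_assoc]
      _ = (2:R) • ((γ - 1) * ((γ + 1) * aeval γ pw)) := by
          rw [sub_mul, one_mul, hδγ]
      _ = (2:R) • ((γ * γ - 1) * aeval γ pw) := by rw [← mul_assoc, hsq']
      _ = (2:R) • aeval γ (1 - P - Pm) := by rw [hgw]
  have hρq_commE0 : aeval γ (1 - P - Pm) * ((2:R) • aeval γ pρq)
      = ((2:R) • aeval γ pρq) * aeval γ (1 - P - Pm) := by
    rw [mul_smul_comm, smul_mul_assoc, hcomm (1 - P - Pm) pρq]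
  have hρp_commE0 : aeval γ (1 - P - Pm) * ((2:R) • aeval γ pρp)
      = ((2:R) • aeval γ pρp) * aeval γ (1 - P - Pm) := by
    rw [mul_smul_comm, smul_mul_assoc, hcomm (1 - P - Pm) pρp]
  have hρqr : ((2:R) • aeval γ pρq) * (h⁻¹ * qm) = aeval γ (1 - P - Pm) := by
    rw [← hrqρ]
    apply hcan
    calc (2:R) • (((2:R) • aeval γ pρq) * (h⁻¹ * qm))
        = ((2:R) • aeval γ pρq) * ((2:R) • (h⁻¹ * qm)) := (mul_smul_comm _ _ _).symm
      _ = ((2:R) • aeval γ pρq) * (1 + δ) := by rw [hrq2]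
      _ = (1 + δ) * ((2:R) • aeval γ pρq) := by
          rw [mul_add, add_mul, mul_one, one_mul, mul_smul_comm, smul_mul_assoc,
            hcommδ pρq]
      _ = ((2:R) • (h⁻¹ * qm)) * ((2:R) • aeval γ pρq) := by rw [hrq2]
      _ = (2:R) • ((h⁻¹ * qm) * ((2:R) • aeval γ pρq)) := smul_mul_assoc _ _ _
  have hρpr : ((2:R) • aeval γ pρp) * (h⁻¹ * pm) = aeval γ (1 - P - Pm) := by
    rw [← hrpρ]
    apply hcan
    calc (2:R) • (((2:R) • aeval γ pρp) * (h⁻¹ * pm))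
        = ((2:R) • aeval γ pρp) * ((2:R) • (h⁻¹ * pm)) := (mul_smul_comm _ _ _).symm
      _ = ((2:R) • aeval γ pρp) * (1 - δ) := by rw [hrp2]
      _ = (1 - δ) * ((2:R) • aeval γ pρp) := by
          rw [mul_sub, sub_mul, mul_one, one_mul, mul_smul_comm, smul_mul_assoc,
            hcommδ pρp]
      _ = ((2:R) • (h⁻¹ * pm)) * ((2:R) • aeval γ pρp) := by rw [hrp2]
      _ = (2:R) • ((h⁻¹ * pm) * ((2:R) • aeval γ pρp)) := smul_mul_assoc _ _ _
  -- now the submodule part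
  intro Bp Bq hBp hBq Mplus Mminus M0 hMp hMm hM0
  have hBappq : ∀ x y, Matrix.toLinearMap₂' R qm x y = x ⬝ᵥ (qm *ᵥ y) := fun x y =>
    Matrix.toLinearMap₂'_apply' _ _ _
  have hBappp : ∀ x y, Matrix.toLinearMap₂' R pm x y = x ⬝ᵥ (pm *ᵥ y) := fun x y =>
    Matrix.toLinearMap₂'_apply' _ _ _
  have hWp' : ∀ x, x ∈ Mplus ↔ aeval γ P *ᵥ x = x := by
    intro x; rw [hMp, LinearMap.mem_ker, Matrix.toLin'_apply]; exact hker_p x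
  have hWm' : ∀ x, x ∈ Mminus ↔ aeval γ Pm *ᵥ x = x := by
    intro x; rw [hMm, LinearMap.mem_ker, Matrix.toLin'_apply]; exact hker_q x
  have hW0' : ∀ x, x ∈ M0 ↔ aeval γ (1 - P - Pm) *ᵥ x = x := by
    intro x
    rw [hM0, Submodule.mem_inf, Submodule.mem_orthogonalBilin_iff,
      Submodule.mem_orthogonalBilin_iff]
    constructor
    · rintro ⟨hqo, hpo⟩
      have hex : aeval γ P *ᵥ x = 0 := by
        have h3 : ((aeval γ P)ᵀ * qm) *ᵥ x = 0 := by
          apply forall_dot_eq_zero3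
          intro y
          rw [dotProduct_comm]
          have hmem : aeval γ P *ᵥ y ∈ Mplus :=
            (hWp' _).mpr (by rw [Matrix.mulVec_mulVec, hee])
          have h1 := hqo _ hmem
          rw [hBq, hBappq] at h1
          rw [← Matrix.mulVec_mulVec, ← dot_shift3]
          exact h1
        rw [heq, hqme, ← Matrix.mulVec_mulVec] at h3
        exact mulVec_cancel3 hdetT h3
      have hfx : aeval γ Pm *ᵥ x = 0 := by
        have h3 : ((aeval γ Pm)ᵀ * pm) *ᵥ x = 0 := by
          apply forall_dot_eq_zero3
          intro y
          rw [dotProduct_comm]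
          have hmem : aeval γ Pm *ᵥ y ∈ Mminus :=
            (hWm' _).mpr (by rw [Matrix.mulVec_mulVec, hff])
          have h1 := hpo _ hmem
          rw [hBp, hBappp] at h1
          rw [← Matrix.mulVec_mulVec, ← dot_shift3]
          exact h1
        rw [hfp, hpmf, Matrix.neg_mulVec, neg_eq_zero, ← Matrix.mulVec_mulVec] at h3
        exact mulVec_cancel3 hdetT h3
      rw [hE0x, Matrix.sub_mulVec, Matrix.sub_mulVec, Matrix.one_mulVec, hex, hfx,
        sub_zero, sub_zero]
    · intro hx
      constructor
      · intro a ha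
        rw [hBq, hBappq, ← hx, Matrix.mulVec_mulVec,
          show qm * aeval γ (1 - P - Pm) = (aeval γ (1 - P - Pm))ᵀ * qm from hE0q.symm,
          ← Matrix.mulVec_mulVec, ← dot_shift3]
        have ha' : aeval γ (1 - P - Pm) *ᵥ a = 0 := by
          rw [← (hWp' _).mp ha, Matrix.mulVec_mulVec, hE0e, Matrix.zero_mulVec]
        rw [ha', zero_dotProduct]
      · intro a ha
        rw [hBp, hBappp, ← hx, Matrix.mulVec_mulVec,
          show pm * aeval γ (1 - P - Pm) = (aeval γ (1 - P - Pm))ᵀ * pm from hE0p.symm,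
          ← Matrix.mulVec_mulVec, ← dot_shift3]
        have ha' : aeval γ (1 - P - Pm) *ᵥ a = 0 := by
          rw [← (hWm' _).mp ha, Matrix.mulVec_mulVec, hE0f, Matrix.zero_mulVec]
        rw [ha', zero_dotProduct]
  -- decomposition of any vector
  have hsum1 : ∀ x : Fin n → R,
      aeval γ P *ᵥ x + (aeval γ Pm *ᵥ x + aeval γ (1 - P - Pm) *ᵥ x) = x := by
    intro x
    rw [hE0x, Matrix.sub_mulVec, Matrix.sub_mulVec, Matrix.one_mulVec]
    abel
  refine ⟨?_, ?_, ?_, ?_, ?_⟩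
  · -- internal direct sum
    exact internal3 (aeval γ P) (aeval γ Pm) (aeval γ (1 - P - Pm)) Mplus Mminus M0
      hWp' hWm' hW0' hee hff hE0E0 hef heE0 hfe hfE0 hE0e hE0f hsum1
  · -- Bq on Mplus
    rw [hBq, ← hq_fact]
    have hrx : ∀ x ∈ Mplus, (h⁻¹ * qm) *ᵥ x = x := by
      intro x hx
      conv_lhs => rw [← (hWp' x).mp hx]
      rw [Matrix.mulVec_mulVec, hrq_e]
      exact (hWp' x).mp hx
    refine unimod_comp h (h⁻¹ * qm) 1 Mplus
      (fun x hx => by rw [hrx x hx]; exact hx)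
      (fun x hx => by rw [Matrix.one_mulVec]; exact hx)
      (fun x hx => by rw [Matrix.one_mulVec]; exact hrx x hx)
      (fun x hx => by rw [hrx x hx, Matrix.one_mulVec])
      (unimod_base h (aeval γ P) hdet hee heT Mplus hWp')
  · -- Bp on Mminus
    rw [hBp, ← hp_fact]
    have hrx : ∀ x ∈ Mminus, (h⁻¹ * pm) *ᵥ x = x := by
      intro x hx
      conv_lhs => rw [← (hWm' x).mp hx]
      rw [Matrix.mulVec_mulVec, hrp_f]
      exact (hWm' x).mp hx
    refine unimod_comp h (h⁻¹ * pm) 1 Mminus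
      (fun x hx => by rw [hrx x hx]; exact hx)
      (fun x hx => by rw [Matrix.one_mulVec]; exact hx)
      (fun x hx => by rw [Matrix.one_mulVec]; exact hrx x hx)
      (fun x hx => by rw [hrx x hx, Matrix.one_mulVec])
      (unimod_base h (aeval γ Pm) hdet hff hfT Mminus hWm')
  · -- Bq on M0
    rw [hBq, ← hq_fact]
    have hrW : ∀ x ∈ M0, (h⁻¹ * qm) *ᵥ x ∈ M0 := by
      intro x hx
      rw [hW0']
      rw [Matrix.mulVec_mulVec, ← hrqE0, ← Matrix.mulVec_mulVec, (hW0' x).mp hx]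
    have hρW : ∀ x ∈ M0, ((2:R) • aeval γ pρq) *ᵥ x ∈ M0 := by
      intro x hx
      rw [hW0']
      rw [Matrix.mulVec_mulVec, hρq_commE0, ← Matrix.mulVec_mulVec, (hW0' x).mp hx]
    refine unimod_comp h (h⁻¹ * qm) ((2:R) • aeval γ pρq) M0 hrW hρW
      (fun x hx => by
        rw [Matrix.mulVec_mulVec, hrqρ, (hW0' x).mp hx])
      (fun x hx => by
        rw [Matrix.mulVec_mulVec, hρqr, (hW0' x).mp hx])
      (unimod_base h (aeval γ (1 - P - Pm)) hdet hE0E0 hE0T M0 hW0')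
  · -- Bp on M0
    rw [hBp, ← hp_fact]
    have hrW : ∀ x ∈ M0, (h⁻¹ * pm) *ᵥ x ∈ M0 := by
      intro x hx
      rw [hW0']
      rw [Matrix.mulVec_mulVec, ← hrpE0, ← Matrix.mulVec_mulVec, (hW0' x).mp hx]
    have hρW : ∀ x ∈ M0, ((2:R) • aeval γ pρp) *ᵥ x ∈ M0 := by
      intro x hx
      rw [hW0']
      rw [Matrix.mulVec_mulVec, hρp_commE0, ← Matrix.mulVec_mulVec, (hW0' x).mp hx]
    refine unimod_comp h (h⁻¹ * pm) ((2:R) • aeval γ pρp) M0 hrW hρW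
      (fun x hx => by
        rw [Matrix.mulVec_mulVec, hrpρ, (hW0' x).mp hx])
      (fun x hx => by
        rw [Matrix.mulVec_mulVec, hρpr, (hW0' x).mp hx])
      (unimod_base h (aeval γ (1 - P - Pm)) hdet hE0E0 hE0T M0 hW0')

private lemma smul_form_one (γ : Matrix (Fin n) (Fin n) R) :
    γ - (1:R) • 1 = γ - 1 := by rw [one_smul]

private lemma smul_form_negone (γ : Matrix (Fin n) (Fin n) R) :
    γ - (-1:R) • 1 = γ + 1 := by rw [neg_smul, one_smul, sub_neg_eq_add]

private lemma case_order (γ δ : Matrix (Fin n) (Fin n) R)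
    (hδγ : δ * γ = 1)
    (k : ℕ) (hk : 0 < k) (hord : γ ^ k = 1)
    (h2 : IsUnit (2:R)) (hku : IsUnit ((k:ℕ):R)) :
    ∃ P S Pm Sm D : R[X],
      aeval γ P * (γ - 1) = 0 ∧ (γ - 1) * aeval γ S = 1 - aeval γ P ∧
      aeval γ Pm * (γ + 1) = 0 ∧ (γ + 1) * aeval γ Sm = 1 - aeval γ Pm ∧
      aeval γ D = δ := by
  set m : ℕ := 2 * k with hm
  have hm0 : 0 < m := by omega
  have hm1 : γ ^ m = 1 := by
    rw [hm, Nat.mul_comm, pow_mul, hord, one_pow]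
  have h0 : aeval γ ((X : R[X]) ^ m - 1) = 0 := by
    rw [map_sub, _root_.map_one, aeval_X_pow, hm1, sub_self]
  have hmunit : IsUnit ((m:ℕ):R) := by
    rw [hm]
    push_cast
    exact h2.mul hku
  -- derivative fact, generic in a
  have hder : ∀ (a : R) (g : R[X]), ((X:R[X]) ^ m - 1) = (X - C a) * g →
      g.eval a = (m : R) * a ^ (m - 1) := by
    intro a g hg
    have h1 := congrArg derivative hg
    rw [derivative_sub, derivative_one, sub_zero, derivative_X_pow, derivative_mul,
      derivative_sub, derivative_X, derivative_C, sub_zero, one_mul] at h1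
    have h2' := congrArg (eval a) h1
    simp only [eval_mul, eval_add, eval_sub, eval_X, eval_C, eval_pow, sub_self,
      zero_mul, add_zero] at h2'
    exact h2'.symm
  -- a = 1
  have hdvd1 : ((X : R[X]) - C 1) ∣ ((X:R[X]) ^ m - 1) := by
    apply dvd_iff_isRoot.mpr
    simp [IsRoot]
  obtain ⟨g1, hg1⟩ := hdvd1
  have hg1u : IsUnit (g1.eval 1) := by
    rw [hder 1 g1 hg1, one_pow, mul_one]
    exact hmunit
  obtain ⟨P, S, hP, hS⟩ := exists_proj' γ 1 ((X:R[X]) ^ m - 1) h0 (Or.inr ⟨g1, hg1, hg1u⟩)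
  -- a = -1
  have hdvd2 : ((X : R[X]) - C (-1)) ∣ ((X:R[X]) ^ m - 1) := by
    apply dvd_iff_isRoot.mpr
    have : ((-1 : R)) ^ m = 1 := by
      rw [hm]
      exact Even.neg_one_pow ⟨k, (two_mul k)⟩
    simp [IsRoot, this]
  obtain ⟨g2, hg2⟩ := hdvd2
  have hg2u : IsUnit (g2.eval (-1)) := by
    rw [hder (-1) g2 hg2]
    have hodd : ((-1 : R)) ^ (m - 1) = -1 := Odd.neg_one_pow ⟨k - 1, by omega⟩
    rw [hodd, mul_neg_one]
    exact hmunit.neg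
  obtain ⟨Pm, Sm, hPm, hSm⟩ :=
    exists_proj' γ (-1) ((X:R[X]) ^ m - 1) h0 (Or.inr ⟨g2, hg2, hg2u⟩)
  rw [smul_form_one] at hP hS
  rw [smul_form_negone] at hPm hSm
  refine ⟨P, S, Pm, Sm, X ^ (m - 1), hP, hS, hPm, hSm, ?_⟩
  rw [aeval_X_pow]
  have hstep : γ ^ m = γ * γ ^ (m - 1) := by
    rw [← pow_succ']
    congr 1
    omega
  calc γ ^ (m - 1) = (δ * γ) * γ ^ (m - 1) := by rw [hδγ, one_mul]
    _ = δ * (γ * γ ^ (m - 1)) := by rw [mul_assoc]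
    _ = δ * γ ^ m := by rw [← hstep]
    _ = δ := by rw [hm1, mul_one]

private lemma case_ss {F : Type*} [Field F] {n : ℕ} (γ δ : Matrix (Fin n) (Fin n) F)
    (hγδ : γ * δ = 1) (hδγ : δ * γ = 1)
    (hsq : Squarefree (minpoly F γ)) :
    ∃ P S Pm Sm D : Polynomial F,
      aeval γ P * (γ - 1) = 0 ∧ (γ - 1) * aeval γ S = 1 - aeval γ P ∧
      aeval γ Pm * (γ + 1) = 0 ∧ (γ + 1) * aeval γ Sm = 1 - aeval γ Pm ∧
      aeval γ D = δ := by
  have hint : IsIntegral F γ := Algebra.IsIntegral.isIntegral γ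
  have h0 : aeval γ (minpoly F γ) = 0 := minpoly.aeval F γ
  have hcase : ∀ a : F, IsUnit ((minpoly F γ).eval a) ∨
      ∃ g : Polynomial F, minpoly F γ = (X - C a) * g ∧ IsUnit (g.eval a) := by
    intro a
    by_cases hev : (minpoly F γ).eval a = 0
    · right
      obtain ⟨g, hg⟩ := (dvd_iff_isRoot.mpr hev)
      refine ⟨g, hg, ?_⟩
      rw [isUnit_iff_ne_zero]
      intro hgz
      obtain ⟨g2, hg2⟩ := (dvd_iff_isRoot.mpr hgz)
      have hdvd : (X - C a) * (X - C a) ∣ minpoly F γ := ⟨g2, by rw [hg, hg2]; ring⟩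
      exact Polynomial.not_isUnit_X_sub_C a (hsq (X - C a) hdvd)
    · exact Or.inl (isUnit_iff_ne_zero.mpr hev)
  obtain ⟨P, S, hP, hS⟩ := exists_proj' γ 1 (minpoly F γ) h0 (hcase 1)
  obtain ⟨Pm, Sm, hPm, hSm⟩ := exists_proj' γ (-1) (minpoly F γ) h0 (hcase (-1))
  rw [smul_form_one] at hP hS
  rw [smul_form_negone] at hPm hSm
  -- build D
  have hc0 : (minpoly F γ).coeff 0 ≠ 0 := by
    intro hc
    obtain ⟨t, ht⟩ := (Polynomial.X_dvd_iff.mpr hc)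
    have ht0 : aeval γ t = 0 := by
      have h1 : γ * aeval γ t = 0 := by
        have h2 := h0
        rw [ht, _root_.map_mul] at h2
        rwa [aeval_X] at h2
      calc aeval γ t = (δ * γ) * aeval γ t := by rw [hδγ, one_mul]
        _ = δ * (γ * aeval γ t) := by rw [mul_assoc]
        _ = 0 := by rw [h1, mul_zero]
    have htne : t ≠ 0 := by
      intro h1
      apply minpoly.ne_zero hint
      rw [ht, h1, mul_zero]
    have hlt : t.degree < (minpoly F γ).degree := by
      rw [ht, mul_comm]
      exact Polynomial.degree_lt_degree_mul_X (fun h1 => htne h1)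
    exact absurd (minpoly.degree_le_of_ne_zero F γ htne ht0) (not_le.mpr hlt)
  have hXdiv : (X : Polynomial F) * (minpoly F γ).divX = minpoly F γ - C ((minpoly F γ).coeff 0) := by
    have := Polynomial.X_mul_divX_add (minpoly F γ)
    linear_combination this
  have hkey : γ * aeval γ ((minpoly F γ).divX) = -(((minpoly F γ).coeff 0) • 1) := by
    have h1 := congrArg (aeval γ) hXdiv
    rw [_root_.map_mul, aeval_X, map_sub, h0, aeval_C, zero_sub,
      Algebra.algebraMap_eq_smul_one] at h1
    exact h1
  refine ⟨P, S, Pm, Sm, C (-(((minpoly F γ).coeff 0)⁻¹)) * (minpoly F γ).divX,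
    hP, hS, hPm, hSm, ?_⟩
  have hγD : γ * aeval γ (C (-(((minpoly F γ).coeff 0)⁻¹)) * (minpoly F γ).divX) = 1 := by
    rw [_root_.map_mul, aeval_C, Algebra.algebraMap_eq_smul_one, smul_mul_assoc, one_mul,
      mul_smul_comm, hkey, smul_neg, neg_smul, neg_neg, smul_smul,
      inv_mul_cancel₀ hc0, one_smul]
  calc aeval γ (C (-(((minpoly F γ).coeff 0)⁻¹)) * (minpoly F γ).divX)
      = (δ * γ) * aeval γ (C (-(((minpoly F γ).coeff 0)⁻¹)) * (minpoly F γ).divX) := by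
        rw [hδγ, one_mul]
    _ = δ * (γ * aeval γ (C (-(((minpoly F γ).coeff 0)⁻¹)) * (minpoly F γ).divX)) := by
        rw [mul_assoc]
    _ = δ := by rw [hγD, mul_one]

end PMZHelpers

open Matrix Polynomial in
/-- For an `R`-Θ-semisimple `h = p + q` (skew part `p`, symmetric part `q`), the module
`M = Rⁿ` decomposes as `M₊ ⊕ M₋ ⊕ M₀`, where `M₊ = ker p`, `M₋ = ker q` and `M₀` is the
intersection of the `q`-orthogonal complement of `M₊` with the `p`-orthogonal complement of
`M₋`; the restrictions `q|M₊`, `p|M₋`, `q|M₀`, `p|M₀` are unimodular. -/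
theorem plus_minus_zero_decomposition
    {R : Type*} [CommRing R] [IsDomain R] [IsLocalRing R] (hR : IsPaperRing R)
    {n : ℕ} (h pm qm : Matrix (Fin n) (Fin n) R) (hinv : IsUnit h)
    (hss : IsRSemisimpleMatrix R ((hᵀ)⁻¹ * h))
    (hsum : h = pm + qm) (hskew : pmᵀ = -pm) (hsymm : qmᵀ = qm) :
    ∀ (Bp Bq : (Fin n → R) →ₗ[R] (Fin n → R) →ₗ[R] R),
      Bp = Matrix.toLinearMap₂' R pm → Bq = Matrix.toLinearMap₂' R qm →
    ∀ (Mplus Mminus M0 : Submodule R (Fin n → R)),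
      Mplus = LinearMap.ker (Matrix.toLin' pm) →
      Mminus = LinearMap.ker (Matrix.toLin' qm) →
      M0 = (Mplus.orthogonalBilin Bq) ⊓ (Mminus.orthogonalBilin Bp) →
      DirectSum.IsInternal ![Mplus, Mminus, M0] ∧
      IsUnimodularOn Bq Mplus ∧ IsUnimodularOn Bp Mminus ∧
      IsUnimodularOn Bq M0 ∧ IsUnimodularOn Bp M0 := by
  have hdet : IsUnit h.det := (Matrix.isUnit_iff_isUnit_det h).mp hinv
  have hdetT : IsUnit (hᵀ).det := by rwa [Matrix.det_transpose]
  have hhinv : h * h⁻¹ = 1 := Matrix.mul_nonsing_inv h hdet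
  have hinvh : h⁻¹ * h = 1 := Matrix.nonsing_inv_mul h hdet
  have hThinv : hᵀ * (hᵀ)⁻¹ = 1 := Matrix.mul_nonsing_inv _ hdetT
  have hinvhT : (hᵀ)⁻¹ * hᵀ = 1 := Matrix.nonsing_inv_mul _ hdetT
  set γ : Matrix (Fin n) (Fin n) R := (hᵀ)⁻¹ * h with hγ
  set δ : Matrix (Fin n) (Fin n) R := h⁻¹ * hᵀ with hδ
  have hγδ : γ * δ = 1 := by
    rw [hγ, hδ, mul_assoc, ← mul_assoc h h⁻¹ hᵀ, hhinv, one_mul, hinvhT]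
  have hδγ : δ * γ = 1 := by
    rw [hγ, hδ, mul_assoc, ← mul_assoc hᵀ _ _, hThinv, one_mul, hinvh]
  -- unit facts about residue characteristic
  have hres : ∀ j : ℕ, ¬ IsUnit ((j:ℕ) : R) → ringChar (IsLocalRing.ResidueField R) ∣ j := by
    intro j hj
    have hmem : ((j:ℕ) : R) ∈ IsLocalRing.maximalIdeal R := by
      rw [IsLocalRing.mem_maximalIdeal]
      exact hj
    have h0 : ((j:ℕ) : IsLocalRing.ResidueField R) = 0 := by
      have h1 := (IsLocalRing.residue_eq_zero_iff ((j:ℕ) : R)).mpr hmem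
      rwa [map_natCast] at h1
    exact (ringChar.spec _ j).mp h0
  have hchar_ne_one : ringChar (IsLocalRing.ResidueField R) ≠ 1 := by
    haveI : CharP (IsLocalRing.ResidueField R) (ringChar (IsLocalRing.ResidueField R)) :=
      ringChar.charP _
    exact CharP.char_ne_one (IsLocalRing.ResidueField R) _
  have h2unit : IsUnit (2 : R) := by
    rcases hR with ⟨hfield, hchar⟩ | ⟨hdvr, _, _, hchar2⟩
    · have h2ne : ((2:ℕ) : R) ≠ 0 := Nat.cast_ne_zero.mpr (by norm_num)
      obtain ⟨b, hb⟩ := hfield.mul_inv_cancel h2ne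
      have := IsUnit.of_mul_eq_one _ hb
      simpa using this
    · by_contra h2n
      have h2n' : ¬ IsUnit ((2:ℕ) : R) := by simpa using h2n
      have hdvd := hres 2 h2n'
      rcases (Nat.dvd_prime Nat.prime_two).mp hdvd with h1 | h1
      · exact hchar_ne_one h1
      · exact hchar2 h1
  -- produce the polynomial data
  have hdata : ∃ P S Pm Sm D : R[X],
      aeval γ P * (γ - 1) = 0 ∧ (γ - 1) * aeval γ S = 1 - aeval γ P ∧
      aeval γ Pm * (γ + 1) = 0 ∧ (γ + 1) * aeval γ Sm = 1 - aeval γ Pm ∧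
      aeval γ D = δ := by
    rcases hss with ⟨hfield, hsemi⟩ | ⟨k, hk, hkcop, hord⟩
    · -- semisimple case: R is a field
      letI : Field R := hfield.toField
      have hsq : Squarefree (minpoly R γ) := by
        have h1 := hsemi.minpoly_squarefree
        rwa [Matrix.minpoly_toLin'] at h1
      exact case_ss γ δ hγδ hδγ hsq
    · -- finite order case
      have hku : IsUnit ((k:ℕ) : R) := by
        by_contra hkn
        have hdvd := hres k hkn
        exact hchar_ne_one ((Nat.Coprime.symm hkcop).eq_one_of_dvd hdvd)
      exact case_order γ δ hδγ k hk hord h2unit hku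
  obtain ⟨P, S, Pm, Sm, D, hP, hS, hPm, hSm, hD⟩ := hdata
  exact master h pm qm γ δ h2unit hdet hγ hδ hsum hskew hsymm P S Pm Sm D hP hS hPm hSm hD
end

section
/- (Orthogonal Cayley transformation) Let q ∈ GL_n(R) be symmetric. The map C̃ : p ↦ (p−q)^{-1}(q+p) is a bijection from the set of skew-symmetric matrices p with p ± q ∈ GL_n(R) to the set of orthogonal transformations b ∈ O(q,R) with b − 1 ∈ GL_n(R), with inverse b ↦ q(b+1)(b−1)^{-1}; moreover every such b satisfies det(b) = (−1)^n. -/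
open Matrix

set_option linter.unusedSectionVars false
set_option maxHeartbeats 1000000

section CayleyAux
variable {R : Type*} [CommRing R] [Invertible (2 : R)] {n : ℕ}

lemma cayleyO_double_isUnit (A : Matrix (Fin n) (Fin n) R) (hA : IsUnit A) :
    IsUnit (A + A) := by
  rw [← two_smul R A, Matrix.isUnit_iff_isUnit_det, Matrix.det_smul]
  exact ((isUnit_of_invertible (2:R)).pow _).mul ((Matrix.isUnit_iff_isUnit_det A).mp hA)

lemma cayleyO_key {q p : Matrix (Fin n) (Fin n) R} (hqd : IsUnit q.det) :
    (p + q) * q⁻¹ * (p - q) = (p - q) * q⁻¹ * (p + q) := by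
  have h1 : q * q⁻¹ = 1 := Matrix.mul_nonsing_inv q hqd
  have h2 : q⁻¹ * q = 1 := Matrix.nonsing_inv_mul q hqd
  have lhs : (p + q) * q⁻¹ * (p - q) = p * q⁻¹ * p - q := by
    simp only [add_mul, sub_mul, mul_sub, mul_add, Matrix.mul_assoc, h2, mul_one, h1]
    simp only [← Matrix.mul_assoc, h1, one_mul]
    abel
  have rhs : (p - q) * q⁻¹ * (p + q) = p * q⁻¹ * p - q := by
    simp only [add_mul, sub_mul, mul_sub, mul_add, Matrix.mul_assoc, h2, mul_one, h1]
    simp only [← Matrix.mul_assoc, h1, one_mul]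
    abel
  rw [lhs, rhs]

lemma cayleyO_mem {q p : Matrix (Fin n) (Fin n) R} (hsymm : qᵀ = q) (hq : IsUnit q)
    (hp : pᵀ = -p) (hu : IsUnit (p - q)) (hv : IsUnit (p + q)) :
    ((p - q)⁻¹ * (q + p))ᵀ * q * ((p - q)⁻¹ * (q + p)) = q ∧
      IsUnit ((p - q)⁻¹ * (q + p) - 1) := by
  have hqd := (Matrix.isUnit_iff_isUnit_det q).mp hq
  have hud := (Matrix.isUnit_iff_isUnit_det _).mp hu
  have hvd := (Matrix.isUnit_iff_isUnit_det _).mp hv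
  -- transpose of b
  have hnegv : (-(p + q))⁻¹ = -(p + q)⁻¹ :=
    Matrix.inv_eq_right_inv (by rw [neg_mul_neg, Matrix.mul_nonsing_inv _ hvd])
  have ht : ((p - q)⁻¹ * (q + p))ᵀ = (p - q) * (p + q)⁻¹ := by
    rw [Matrix.transpose_mul, Matrix.transpose_nonsing_inv, Matrix.transpose_add,
      Matrix.transpose_sub, hsymm, hp]
    have h1 : -p - q = -(p + q) := by abel
    have h2 : q + -p = -(p - q) := by abel
    rw [h1, h2, hnegv, neg_mul_neg]
  -- F2
  have key := cayleyO_key (q := q) (p := p) hqd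
  have F2 : (p + q)⁻¹ * (q * (p - q)⁻¹) = (p - q)⁻¹ * (q * (p + q)⁻¹) := by
    have h := congrArg (fun X : Matrix (Fin n) (Fin n) R => X⁻¹) key
    simp only [Matrix.mul_inv_rev, Matrix.nonsing_inv_nonsing_inv q hqd,
      Matrix.mul_assoc] at h
    exact h.symm
  constructor
  · rw [ht, add_comm q p]
    calc (p - q) * (p + q)⁻¹ * q * ((p - q)⁻¹ * (p + q))
        = (p - q) * ((p + q)⁻¹ * (q * (p - q)⁻¹)) * (p + q) := by
          simp only [Matrix.mul_assoc]
      _ = (p - q) * ((p - q)⁻¹ * (q * (p + q)⁻¹)) * (p + q) := by rw [F2]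
      _ = q := by
          simp only [Matrix.mul_assoc, Matrix.mul_nonsing_inv_cancel_left _ _ hud]
          rw [Matrix.nonsing_inv_mul _ hvd, mul_one]
  · have hb2 : (p - q)⁻¹ * (q + p) - 1 = (p - q)⁻¹ * (q + q) := by
      rw [← Matrix.nonsing_inv_mul (p - q) hud, ← mul_sub]
      congr 1
      abel
    rw [hb2]
    refine IsUnit.mul ?_ (cayleyO_double_isUnit q hq)
    rw [Matrix.isUnit_iff_isUnit_det]
    exact Matrix.isUnit_nonsing_inv_det _ hud

lemma cayleyO_key2 {q p : Matrix (Fin n) (Fin n) R} (hqd : IsUnit q.det) :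
    p * q⁻¹ * (p - q) = (p - q) * q⁻¹ * p := by
  have h1 : q * q⁻¹ = 1 := Matrix.mul_nonsing_inv q hqd
  have h2 : q⁻¹ * q = 1 := Matrix.nonsing_inv_mul q hqd
  have lhs : p * q⁻¹ * (p - q) = p * q⁻¹ * p - p := by
    simp only [mul_sub, Matrix.mul_assoc, h2, mul_one]
  have rhs : (p - q) * q⁻¹ * p = p * q⁻¹ * p - p := by
    simp only [sub_mul, Matrix.mul_assoc]
    simp only [← Matrix.mul_assoc, h1, one_mul]
  rw [lhs, rhs]

lemma cayleyO_left_inv {q p : Matrix (Fin n) (Fin n) R} (hq : IsUnit q)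
    (hu : IsUnit (p - q)) :
    q * ((p - q)⁻¹ * (q + p) + 1) * ((p - q)⁻¹ * (q + p) - 1)⁻¹ = p := by
  have hqd := (Matrix.isUnit_iff_isUnit_det q).mp hq
  have hud := (Matrix.isUnit_iff_isUnit_det _).mp hu
  have h2q := cayleyO_double_isUnit q hq
  have h2qd := (Matrix.isUnit_iff_isUnit_det _).mp h2q
  have key2 := cayleyO_key2 (q := q) (p := p) hqd
  have F3 : q * ((p - q)⁻¹ * p) = p * ((p - q)⁻¹ * q) := by
    have h := congrArg
      (fun X : Matrix (Fin n) (Fin n) R => q * ((p - q)⁻¹ * (X * ((p - q)⁻¹ * q)))) key2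
    simp only [Matrix.mul_assoc, Matrix.mul_nonsing_inv_cancel_left _ _ hud,
      Matrix.nonsing_inv_mul_cancel_left _ _ hud, Matrix.mul_nonsing_inv_cancel_left _ _ hqd,
      Matrix.nonsing_inv_mul _ hqd, mul_one] at h
    exact h
  have hb1 : (p - q)⁻¹ * (q + p) + 1 = (p - q)⁻¹ * (p + p) := by
    rw [← Matrix.nonsing_inv_mul (p - q) hud, ← mul_add]
    congr 1
    abel
  have hb2 : (p - q)⁻¹ * (q + p) - 1 = (p - q)⁻¹ * (q + q) := by
    rw [← Matrix.nonsing_inv_mul (p - q) hud, ← mul_sub]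
    congr 1
    abel
  rw [hb1, hb2, Matrix.mul_inv_rev, Matrix.nonsing_inv_nonsing_inv _ hud]
  have hdist : q * ((p - q)⁻¹ * (p + p)) = p * ((p - q)⁻¹ * (q + q)) := by
    rw [mul_add ((p - q)⁻¹) p p, mul_add, mul_add ((p - q)⁻¹) q q, mul_add, F3]
  calc q * ((p - q)⁻¹ * (p + p)) * ((q + q)⁻¹ * (p - q))
      = (p * ((p - q)⁻¹ * (q + q))) * ((q + q)⁻¹ * (p - q)) := by rw [hdist]
    _ = p := by
        simp only [Matrix.mul_assoc, Matrix.mul_nonsing_inv_cancel_left _ _ h2qd,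
          Matrix.nonsing_inv_mul _ hud, mul_one]

lemma cayleyO_back {q b : Matrix (Fin n) (Fin n) R} (hsymm : qᵀ = q) (hq : IsUnit q)
    (hb : bᵀ * q * b = q) (hbu : IsUnit (b - 1)) :
    (q * (b + 1) * (b - 1)⁻¹)ᵀ = -(q * (b + 1) * (b - 1)⁻¹) ∧
    IsUnit (q * (b + 1) * (b - 1)⁻¹ - q) ∧
    IsUnit (q * (b + 1) * (b - 1)⁻¹ + q) ∧
    (q * (b + 1) * (b - 1)⁻¹ - q)⁻¹ * (q + q * (b + 1) * (b - 1)⁻¹) = b ∧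
    b.det = (-1 : R) ^ n := by
  have hqd := (Matrix.isUnit_iff_isUnit_det q).mp hq
  have hb1d := (Matrix.isUnit_iff_isUnit_det _).mp hbu
  have h2q := cayleyO_double_isUnit q hq
  have h2qd := (Matrix.isUnit_iff_isUnit_det _).mp h2q
  have hbd : IsUnit b.det := by
    have h := congrArg Matrix.det hb
    rw [Matrix.det_mul, Matrix.det_mul, Matrix.det_transpose] at h
    have h2 : q.det * (b.det * b.det) = q.det * 1 := by rw [mul_one]; linear_combination h
    exact IsUnit.of_mul_eq_one _ (hqd.mul_left_cancel h2)
  set p := q * (b + 1) * (b - 1)⁻¹ with hp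
  have e2 : p - q = (q + q) * (b - 1)⁻¹ := by
    refine hbu.mul_right_cancel ?_
    rw [sub_mul, hp, mul_assoc (q * (b + 1)), Matrix.nonsing_inv_mul _ hb1d, mul_one,
      Matrix.nonsing_inv_mul_cancel_right _ _ hb1d, mul_add, mul_sub, mul_one]
    abel
  have e3 : q + p = (q + q) * (b * (b - 1)⁻¹) := by
    refine hbu.mul_right_cancel ?_
    rw [add_mul, hp, mul_assoc (q * (b + 1)), Matrix.nonsing_inv_mul _ hb1d, mul_one,
      mul_assoc (q + q), mul_assoc b, Matrix.nonsing_inv_mul _ hb1d, mul_one,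
      mul_sub, mul_add, mul_one, add_mul]
    abel
  have hbT : IsUnit (bᵀ - 1) := by
    have h : bᵀ - 1 = (b - 1)ᵀ := by rw [Matrix.transpose_sub, Matrix.transpose_one]
    rw [h, Matrix.isUnit_iff_isUnit_det, Matrix.det_transpose]
    exact hb1d
  have hbTd := (Matrix.isUnit_iff_isUnit_det _).mp hbT
  have hpT : pᵀ = (bᵀ - 1)⁻¹ * ((bᵀ + 1) * q) := by
    rw [hp, Matrix.transpose_mul, Matrix.transpose_mul, Matrix.transpose_nonsing_inv,
      Matrix.transpose_sub, Matrix.transpose_one, Matrix.transpose_add, Matrix.transpose_one,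
      hsymm]
  have main : (bᵀ - 1) * ((pᵀ + p) * (b - 1)) = 0 := by
    have c1 : (bᵀ - 1) * pᵀ = (bᵀ + 1) * q := by
      rw [hpT, Matrix.mul_nonsing_inv_cancel_left _ _ hbTd]
    have c2 : p * (b - 1) = q * (b + 1) := by
      rw [hp, Matrix.nonsing_inv_mul_cancel_right _ _ hb1d]
    calc (bᵀ - 1) * ((pᵀ + p) * (b - 1))
        = ((bᵀ - 1) * pᵀ) * (b - 1) + (bᵀ - 1) * (p * (b - 1)) := by noncomm_ring
      _ = (bᵀ + 1) * q * (b - 1) + (bᵀ - 1) * (q * (b + 1)) := by rw [c1, c2]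
      _ = (bᵀ * q * b - q) + (bᵀ * q * b - q) := by noncomm_ring
      _ = 0 := by rw [hb, sub_self, add_zero]
  have hskew : pᵀ = -p := by
    have z1 : (pᵀ + p) * (b - 1) = 0 := hbT.mul_left_cancel (by rw [main, mul_zero])
    have z2 : pᵀ + p = 0 := hbu.mul_right_cancel (by rw [z1, zero_mul])
    exact eq_neg_of_add_eq_zero_left z2
  have hbinv_u : IsUnit ((b - 1)⁻¹) := by
    rw [Matrix.isUnit_iff_isUnit_det]; exact Matrix.isUnit_nonsing_inv_det _ hb1d
  have hu : IsUnit (p - q) := by rw [e2]; exact h2q.mul hbinv_u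
  have hv' : IsUnit (q + p) := by
    rw [e3]
    exact h2q.mul (((Matrix.isUnit_iff_isUnit_det b).mpr hbd).mul hbinv_u)
  have hv : IsUnit (p + q) := add_comm q p ▸ hv'
  have hD : (p - q)⁻¹ * (q + p) = b := by
    rw [e2, e3, Matrix.mul_inv_rev, Matrix.nonsing_inv_nonsing_inv _ hb1d,
      Matrix.mul_assoc (b - 1), Matrix.nonsing_inv_mul_cancel_left _ _ h2qd]
    have comm : (b - 1) * b = b * (b - 1) := by noncomm_ring
    rw [← Matrix.mul_assoc, comm, Matrix.mul_nonsing_inv_cancel_right _ _ hb1d]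
  have hdet : b.det = (-1 : R) ^ n := by
    have htr : (p - q)ᵀ = -(q + p) := by
      rw [Matrix.transpose_sub, hskew, hsymm]; abel
    have d1 : (p - q).det = (-1 : R) ^ n * (q + p).det := by
      rw [← Matrix.det_transpose (p - q), htr, Matrix.det_neg, Fintype.card_fin]
    set x := (q + q).det * ((b - 1)⁻¹).det with hx
    have d2 : (p - q).det = x := by rw [e2, Matrix.det_mul]
    have d3 : (q + p).det = x * b.det := by rw [e3, Matrix.det_mul, Matrix.det_mul, hx]; ring
    have hxu : IsUnit x := h2qd.mul (Matrix.isUnit_nonsing_inv_det _ hb1d)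
    rw [d2, d3] at d1
    have heq : x * 1 = x * ((-1 : R) ^ n * b.det) := by rw [mul_one]; linear_combination d1
    have h1 : (1 : R) = (-1 : R) ^ n * b.det := hxu.mul_left_cancel heq
    have h2 : (-1 : R) ^ n * (-1 : R) ^ n = 1 := by rw [← mul_pow]; norm_num
    calc b.det = ((-1 : R) ^ n * (-1 : R) ^ n) * b.det := by rw [h2, one_mul]
      _ = (-1 : R) ^ n * ((-1 : R) ^ n * b.det) := by ring
      _ = (-1 : R) ^ n := by rw [← h1, mul_one]
  exact ⟨hskew, hu, hv, hD, hdet⟩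

end CayleyAux

/-- The orthogonal Cayley transformation: for a symmetric `q ∈ GLₙ(R)`, the map
`p ↦ (p − q)⁻¹ (q + p)` is a bijection from the skew-symmetric matrices `p` with `p ± q`
invertible onto the orthogonal transformations `b` (w.r.t. `q`) with `b − 1` invertible,
with inverse `b ↦ q (b + 1) (b − 1)⁻¹`; moreover every such `b` has `det b = (−1)ⁿ`. -/
theorem orthogonal_cayley_transformation {R : Type*} [CommRing R] [Invertible (2 : R)]
    {n : ℕ} (q : Matrix (Fin n) (Fin n) R) (hsymm : qᵀ = q) (hq : IsUnit q) :
    Set.BijOn (fun p : Matrix (Fin n) (Fin n) R => (p - q)⁻¹ * (q + p))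
      {p | pᵀ = -p ∧ IsUnit (p - q) ∧ IsUnit (p + q)}
      {b | bᵀ * q * b = q ∧ IsUnit (b - 1)} ∧
    (∀ p : Matrix (Fin n) (Fin n) R, pᵀ = -p → IsUnit (p - q) → IsUnit (p + q) →
      q * ((p - q)⁻¹ * (q + p) + 1) * ((p - q)⁻¹ * (q + p) - 1)⁻¹ = p) ∧
    (∀ b : Matrix (Fin n) (Fin n) R, bᵀ * q * b = q → IsUnit (b - 1) →
      ((q * (b + 1) * (b - 1)⁻¹ - q)⁻¹ * (q + q * (b + 1) * (b - 1)⁻¹) = b)) ∧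
    (∀ b : Matrix (Fin n) (Fin n) R, bᵀ * q * b = q → IsUnit (b - 1) →
      b.det = (-1 : R) ^ n) := by
  refine ⟨⟨?_, ?_, ?_⟩, ?_, ?_, ?_⟩
  · rintro p ⟨hp, hu, hv⟩
    exact cayleyO_mem hsymm hq hp hu hv
  · rintro p1 ⟨hp1, hu1, hv1⟩ p2 ⟨hp2, hu2, hv2⟩ heq
    dsimp only at heq
    have e1 := cayleyO_left_inv (q := q) (p := p1) hq hu1
    have e2 := cayleyO_left_inv (q := q) (p := p2) hq hu2
    rw [← e1, heq, e2]
  · rintro b ⟨horth, hbu⟩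
    obtain ⟨hskew, hu, hv, hD, -⟩ := cayleyO_back hsymm hq horth hbu
    exact ⟨q * (b + 1) * (b - 1)⁻¹, ⟨hskew, hu, hv⟩, hD⟩
  · intro p hp hu hv
    exact cayleyO_left_inv hq hu
  · intro b horth hbu
    exact (cayleyO_back hsymm hq horth hbu).2.2.2.1
  · intro b horth hbu
    exact (cayleyO_back hsymm hq horth hbu).2.2.2.2
end
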